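/- arXiv:0712.3736 — 5 statements merged into one kernel-verified Lean document; each statement's English description precedes it below -/
import Mathlib

section
/- Let P be a finite subset of the Euclidean plane ℝ². Then P is collinear if and only if 𝒱^[n](P) = ∅ for every n ≥ 1 (equivalently, the Voronoi vertex set 𝒱(P) is empty if and only if P is collinear). -/
set_option maxHeartbeats 1000000

open Set
open scoped RealInnerProductSpace

abbrev Plane : Type := EuclideanSpace ℝ (Fin 2)

/-- The Voronoi cell of a generator `p` for a generating set `P`. -/
def cell (P : Set Plane) (p : Plane) : Set Plane :=
  {x : Plane | ∀ q ∈ P, dist x p ≤ dist x q}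

/-- The set of nearest generators of `x` in `P`. -/
def nearest (P : Set Plane) (x : Plane) : Set Plane :=
  {p ∈ P | ∀ q ∈ P, dist x p ≤ dist x q}

/-- The Voronoi vertex set: points with at least 3 nearest generators. -/
def vtx (P : Set Plane) : Set Plane :=
  {x : Plane | 3 ≤ (nearest P x).encard}

/-- The boundary of a point set: its points on the frontier of its convex hull. -/
def Bd (S : Set Plane) : Set Plane :=
  S ∩ frontier (convexHull ℝ S)

/-- The number of instances of cocircularity. -/
noncomputable def Ic (P : Set Plane) : ℤ :=
  ∑ᶠ x ∈ vtx P, (((nearest P x).ncard : ℤ) - 3)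

lemma key_expand (m u p r : Plane) (t : ℝ) :
    dist (m + t • u) r ^ 2 - dist (m + t • u) p ^ 2
      = (dist m r ^ 2 - dist m p ^ 2) - t * (2 * ⟪u, r - p⟫) := by
  simp only [dist_eq_norm, @norm_sub_sq_real, inner_add_left, real_inner_smul_left,
    inner_sub_right]
  ring

lemma vtx_empty_of_collinear (P : Set Plane) (h : Collinear ℝ P) : vtx P = ∅ := by
  ext x
  simp only [vtx, mem_setOf_eq, mem_empty_iff_false, iff_false, not_le]
  by_contra hx
  push_neg at hx
  obtain ⟨t, hts, ht3⟩ := Set.exists_subset_encard_eq hx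
  obtain ⟨p, q, r, hpq, hpr, hqr, rfl⟩ := Set.encard_eq_three.1 ht3
  have hp := hts (by simp : p ∈ ({p, q, r} : Set Plane))
  have hq := hts (by simp : q ∈ ({p, q, r} : Set Plane))
  have hr := hts (by simp : r ∈ ({p, q, r} : Set Plane))
  have hpP : p ∈ P := hp.1
  have hqP : q ∈ P := hq.1
  have hrP : r ∈ P := hr.1
  have e1 : dist x p = dist x q := le_antisymm (hp.2 q hqP) (hq.2 p hpP)
  have e2 : dist x p = dist x r := le_antisymm (hp.2 r hrP) (hr.2 p hpP)
  have hc1 : Collinear ℝ ({p, q, r} : Set Plane) :=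
    h.subset (by intro y hy; rcases hy with rfl | rfl | rfl <;> assumption)
  have hc2 : Collinear ℝ ({q, p, r} : Set Plane) :=
    h.subset (by intro y hy; rcases hy with rfl | rfl | rfl <;> assumption)
  have W1 : Wbtw ℝ p q r :=
    hc1.wbtw_of_dist_eq_of_dist_le (p := x) (r := dist p x) rfl
      (by rw [dist_comm q x, dist_comm p x]; exact e1.ge)
      (by rw [dist_comm r x, dist_comm p x]; exact e2.symm) hpr
  have W2 : Wbtw ℝ q p r :=
    hc2.wbtw_of_dist_eq_of_dist_le (p := x) (r := dist q x) rfl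
      (by rw [dist_comm p x, dist_comm q x]; exact e1.le)
      (by rw [dist_comm r x, dist_comm q x]; exact (e1.symm.trans e2).symm) hqr
  exact hpq ((wbtw_swap_left_iff ℝ r).1 ⟨W1, W2⟩)

lemma vtx_nonempty_of_not_collinear (P : Set Plane) (hP : P.Finite)
    (h : ¬ Collinear ℝ P) : (vtx P).Nonempty := by
  classical
  -- a closest pair
  have hnt : P.Nontrivial := by
    by_contra hs
    have hss : P.Subsingleton := Set.not_nontrivial_iff.1 hs
    rcases P.eq_empty_or_nonempty with he | ⟨a, ha⟩
    · exact h (he ▸ collinear_empty ℝ Plane)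
    · exact h ((collinear_singleton ℝ a).subset fun y hy => hss hy ha)
  obtain ⟨a, ha, b, hb, hab⟩ := hnt
  set F := hP.toFinset with hF
  set D := (F ×ˢ F).filter (fun z => z.1 ≠ z.2) with hD
  have hDne : D.Nonempty := ⟨(a, b), by
    simp [hD, hF, Finset.mem_filter, Finset.mem_product, hP.mem_toFinset, ha, hb, hab]⟩
  obtain ⟨⟨p, q⟩, hpqD, hmin⟩ := D.exists_min_image (fun z => dist z.1 z.2) hDne
  simp only [hD, hF, Finset.mem_filter, Finset.mem_product, hP.mem_toFinset] at hpqD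
  obtain ⟨⟨hpP, hqP⟩, hpq⟩ := hpqD
  have hmin' : ∀ r ∈ P, ∀ s ∈ P, r ≠ s → dist p q ≤ dist r s := by
    intro r hr s hs hrs
    exact hmin (r, s) (by simp [hD, hF, Finset.mem_filter, Finset.mem_product,
      hP.mem_toFinset, hr, hs, hrs])
  set v : Plane := q - p with hv_def
  have hv : v ≠ 0 := sub_ne_zero.2 (Ne.symm hpq)
  set m : Plane := (2⁻¹ : ℝ) • (p + q) with hm_def
  have hmp : m - p = (2⁻¹ : ℝ) • (q - p) := by rw [hm_def]; module
  have hmq : m - q = (2⁻¹ : ℝ) • (p - q) := by rw [hm_def]; module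
  have hdmp : dist m p = 2⁻¹ * dist p q := by
    rw [dist_eq_norm, hmp, norm_smul, norm_sub_rev, dist_eq_norm]
    simp
  have hdmq : dist m q = 2⁻¹ * dist p q := by
    rw [dist_eq_norm, hmq, norm_smul, dist_eq_norm]
    simp
  have hmpq : dist m p = dist m q := by rw [hdmp, hdmq]
  -- p is nearest to m
  have hnear : ∀ r ∈ P, dist m p ≤ dist m r := by
    intro r hr
    by_cases hrp : r = p
    · simp [hrp]
    by_cases hrq : r = q
    · rw [hrq, hmpq]
    by_contra hlt
    push_neg at hlt
    have h1 : dist p r ≤ dist p m + dist m r := dist_triangle p m r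
    have h2 : dist p m = 2⁻¹ * dist p q := by rw [dist_comm]; exact hdmp
    have h3 : dist p q ≤ dist p r := hmin' p hpP r hr (fun he => hrp he.symm)
    rw [hdmp] at hlt
    nlinarith [dist_nonneg (x := p) (y := q)]
  -- the direction orthogonal to v
  set u₀ : Plane := WithLp.toLp 2 ![-(v 1), v 0] with hu₀_def
  have hinner : ∀ w : Plane, ⟪u₀, w⟫ = -(v 1) * w 0 + v 0 * w 1 := by
    intro w
    simp [hu₀_def, PiLp.inner_apply, Fin.sum_univ_two, RCLike.inner_apply]
    ring
  have hu₀v : ⟪u₀, v⟫ = 0 := by rw [hinner]; ring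
  -- some point of P is off the line
  have hr₀ : ∃ r₀ ∈ P, ⟪u₀, r₀ - p⟫ ≠ 0 := by
    by_contra hno
    push_neg at hno
    apply h
    rw [collinear_iff_of_mem hpP]
    refine ⟨v, fun r hr => ?_⟩
    have h0 := hno r hr
    rw [hinner] at h0
    have hw : ∀ i, (r - p : Plane) i = r i - p i := fun i => rfl
    rw [hw 0, hw 1] at h0
    have hv01 : v 0 ≠ 0 ∨ v 1 ≠ 0 := by
      by_contra hc
      push_neg at hc
      exact hv (by ext i; fin_cases i <;> simp [hc.1, hc.2])
    rcases hv01 with hv0 | hv1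
    · refine ⟨(r 0 - p 0) / v 0, ?_⟩
      rw [vadd_eq_add]
      ext i
      fin_cases i
      · show r 0 = (r 0 - p 0) / v 0 * v 0 + p 0
        field_simp
        ring
      · show r 1 = (r 0 - p 0) / v 0 * v 1 + p 1
        field_simp
        linear_combination h0
    · refine ⟨(r 1 - p 1) / v 1, ?_⟩
      rw [vadd_eq_add]
      ext i
      fin_cases i
      · show r 0 = (r 1 - p 1) / v 1 * v 0 + p 0
        field_simp
        linear_combination -h0
      · show r 1 = (r 1 - p 1) / v 1 * v 1 + p 1
        field_simp
        ring
  obtain ⟨r₀, hr₀P, hr₀ne⟩ := hr₀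
  obtain ⟨u, huv, hur₀⟩ : ∃ u : Plane, ⟪u, v⟫ = 0 ∧ 0 < ⟪u, r₀ - p⟫ := by
    rcases hr₀ne.lt_or_gt with h1 | h1
    · exact ⟨-u₀, by rw [inner_neg_left, hu₀v]; ring, by rw [inner_neg_left]; linarith⟩
    · exact ⟨u₀, hu₀v, h1⟩
  set α : Plane → ℝ := fun r => dist m r ^ 2 - dist m p ^ 2 with hα_def
  set β : Plane → ℝ := fun r => 2 * ⟪u, r - p⟫ with hβ_def
  have hα0 : ∀ r ∈ P, 0 ≤ α r := by
    intro r hr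
    have := hnear r hr
    simp only [hα_def, sub_nonneg]
    nlinarith [dist_nonneg (x := m) (y := p), dist_nonneg (x := m) (y := r)]
  have hβq : β q = 0 := by
    simp only [hβ_def]; rw [show q - p = v from hv_def ▸ rfl, huv]; ring
  have hβp : β p = 0 := by
    simp only [hβ_def, sub_self, inner_zero_right, mul_zero]
  set S := F.filter (fun r => 0 < β r) with hS_def
  have hr₀S : r₀ ∈ S := by
    simp only [hS_def, hF, Finset.mem_filter, hP.mem_toFinset]
    exact ⟨hr₀P, by simp only [hβ_def]; linarith⟩
  obtain ⟨rs, hrsS, hrsmin⟩ := S.exists_min_image (fun r => α r / β r) ⟨r₀, hr₀S⟩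
  simp only [hS_def, hF, Finset.mem_filter, hP.mem_toFinset] at hrsS
  obtain ⟨hrsP, hβrs⟩ := hrsS
  set T := α rs / β rs with hT_def
  have hT0 : 0 ≤ T := div_nonneg (hα0 rs hrsP) hβrs.le
  set x : Plane := m + T • u with hx_def
  have hkey : ∀ r : Plane, dist x r ^ 2 - dist x p ^ 2 = α r - T * β r := by
    intro r
    rw [hx_def, key_expand]
  clear_value x T S v u₀ m F D
  have hxple : ∀ r ∈ P, dist x p ≤ dist x r := by
    intro r hr
    have h2 : 0 ≤ dist x r ^ 2 - dist x p ^ 2 := by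
      rw [hkey]
      by_cases hb : 0 < β r
      · have hmem : r ∈ S := by
          simp only [hS_def, hF, Finset.mem_filter, hP.mem_toFinset]; exact ⟨hr, hb⟩
        have hle2 : T ≤ α r / β r := hrsmin r hmem
        have : T * β r ≤ α r := (le_div_iff₀ hb).1 hle2
        linarith
      · push_neg at hb
        have : T * β r ≤ 0 := mul_nonpos_of_nonneg_of_nonpos hT0 hb
        linarith [hα0 r hr]
    nlinarith [dist_nonneg (x := x) (y := p), dist_nonneg (x := x) (y := r)]
  have hxq : dist x q = dist x p := by
    have h2 : dist x q ^ 2 - dist x p ^ 2 = 0 := by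
      rw [hkey, hβq]
      simp only [hα_def]
      rw [hmpq]; ring
    nlinarith [dist_nonneg (x := x) (y := p), dist_nonneg (x := x) (y := q)]
  have hxrs : dist x rs = dist x p := by
    have h2 : dist x rs ^ 2 - dist x p ^ 2 = 0 := by
      rw [hkey, hT_def, div_mul_cancel₀ _ (ne_of_gt hβrs)]; ring
    nlinarith [dist_nonneg (x := x) (y := p), dist_nonneg (x := x) (y := rs)]
  -- conclude
  have hsub : ({p, q, rs} : Set Plane) ⊆ nearest P x := by
    intro y hy
    rcases hy with rfl | rfl | rfl
    · exact ⟨hpP, hxple⟩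
    · exact ⟨hqP, fun s hs => hxq ▸ hxple s hs⟩
    · exact ⟨hrsP, fun s hs => hxrs ▸ hxple s hs⟩
  have hrs_p : rs ≠ p := fun he => by rw [he, hβp] at hβrs; exact lt_irrefl 0 hβrs
  have hrs_q : rs ≠ q := fun he => by rw [he, hβq] at hβrs; exact lt_irrefl 0 hβrs
  have h3 : ({p, q, rs} : Set Plane).encard = 3 :=
    Set.encard_eq_three.2 ⟨p, q, rs, hpq, Ne.symm hrs_p, Ne.symm hrs_q, rfl⟩
  exact ⟨x, by simp only [vtx, mem_setOf_eq]; rw [← h3]; exact Set.encard_mono hsub⟩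

theorem collinear_iff_vorIter_empty (P : Set Plane) (hP : P.Finite) :
    Collinear ℝ P ↔ ∀ n : ℕ, 1 ≤ n → vtx^[n] P = ∅ := by
  constructor
  · intro hcol n hn
    have h1 : vtx P = ∅ := vtx_empty_of_collinear P hcol
    have hE : vtx ∅ = ∅ := vtx_empty_of_collinear ∅ (collinear_empty ℝ _)
    obtain ⟨k, rfl⟩ : ∃ k, n = k + 1 := ⟨n - 1, (Nat.succ_pred_eq_of_pos hn).symm⟩
    induction k with
    | zero => simpa using h1
    | succ j ih =>
      rw [Function.iterate_succ_apply', ih (by omega), hE]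
  · intro hall
    by_contra hcol
    have hne := vtx_nonempty_of_not_collinear P hP hcol
    have h1 := hall 1 le_rfl
    rw [Function.iterate_one] at h1
    exact hne.ne_empty h1
end

section
/- Let P be a finite subset of the Euclidean plane ℝ² with at least 3 points. Then all points of P lie on a common circle (there exist c ∈ ℝ² and r > 0 with dist p c = r for all p ∈ P) if and only if the Voronoi vertex set 𝒱(P) has exactly one element; moreover, in that case 𝒱(P) = {c} where c is the common center, and 𝒱^[n](P) = ∅ for all n > 1. -/
open Set

open RealInnerProductSpace

/-! ### Auxiliary lemmas -/

section Aux

lemma inner_coords (x y : Plane) : ⟪x, y⟫ = x 0 * y 0 + x 1 * y 1 := by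
  simp [PiLp.inner_apply, Fin.sum_univ_two, RCLike.inner_apply]; ring

/-- Two vectors orthogonal to a nonzero vector in the plane are dependent. -/
lemma dep_of_orth {v u w : Plane} (hv : v ≠ 0) (hu : u ≠ 0)
    (h1 : ⟪u, v⟫ = 0) (h2 : ⟪w, v⟫ = 0) : ∃ t : ℝ, w = t • u := by
  rw [inner_coords] at h1 h2
  have hvc : v 0 ≠ 0 ∨ v 1 ≠ 0 := by
    by_contra h
    push_neg at h
    apply hv
    ext i
    fin_cases i <;> simp [h.1, h.2]
  have hdet : u 0 * w 1 - u 1 * w 0 = 0 := by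
    rcases hvc with h | h
    · have hz : (u 0 * w 1 - u 1 * w 0) * v 0 = 0 := by
        linear_combination w 1 * h1 - u 1 * h2
      rcases mul_eq_zero.mp hz with h' | h'
      · exact h'
      · exact absurd h' h
    · have hz : (u 0 * w 1 - u 1 * w 0) * v 1 = 0 := by
        linear_combination u 0 * h2 - w 0 * h1
      rcases mul_eq_zero.mp hz with h' | h'
      · exact h'
      · exact absurd h' h
  have huc : u 0 ≠ 0 ∨ u 1 ≠ 0 := by
    by_contra h
    push_neg at h
    apply hu
    ext i
    fin_cases i <;> simp [h.1, h.2]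
  rcases huc with h | h
  · refine ⟨w 0 / u 0, ?_⟩
    ext i
    fin_cases i <;> simp [PiLp.smul_apply] <;> field_simp <;> nlinarith [hdet]
  · refine ⟨w 1 / u 1, ?_⟩
    ext i
    fin_cases i <;> simp [PiLp.smul_apply] <;> field_simp <;> nlinarith [hdet]

/-- Collinear points on a circle coincide. -/
lemma circ_collinear {a u : Plane} (hu : u ≠ 0) (t : ℝ)
    (h1 : ‖a + u‖ = ‖a‖) (h2 : ‖a + t • u‖ = ‖a‖) : t = 0 ∨ t = 1 := by
  have e1 : ‖a + u‖^2 = ‖a‖^2 := by rw [h1]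
  have e2 : ‖a + t • u‖^2 = ‖a‖^2 := by rw [h2]
  rw [norm_add_sq_real] at e1 e2
  rw [real_inner_smul_right] at e2
  have hun : 0 < ‖u‖ := norm_pos_iff.mpr hu
  rw [show ‖t • u‖^2 = t^2 * ‖u‖^2 by
    rw [norm_smul, Real.norm_eq_abs, mul_pow, sq_abs]] at e2
  have h3 : t * (t - 1) * ‖u‖^2 = 0 := by linear_combination e2 - t * e1
  rcases mul_eq_zero.mp h3 with h | h
  · rcases mul_eq_zero.mp h with h | h
    · exact Or.inl h
    · right; linarith
  · exact absurd h (by positivity)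

/-- Orthogonality from equal distances to two centers. -/
lemma orth_of_two_dists {p p' c x : Plane} (h1 : dist p c = dist p' c)
    (h2 : dist p x = dist p' x) : ⟪p - p', x - c⟫ = 0 := by
  have e1 : ‖p - c‖^2 = ‖p' - c‖^2 := by rw [← dist_eq_norm, ← dist_eq_norm, h1]
  have e2 : ‖p - x‖^2 = ‖p' - x‖^2 := by rw [← dist_eq_norm, ← dist_eq_norm, h2]
  rw [← real_inner_self_eq_norm_sq, ← real_inner_self_eq_norm_sq] at e1 e2
  simp only [inner_sub_left, inner_sub_right, real_inner_comm] at e1 e2 ⊢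
  linarith [real_inner_comm p c, real_inner_comm p' c, real_inner_comm p x,
    real_inner_comm p' x]

lemma dist_le_of_sq_le {y a p : Plane} (h : ‖y - a‖^2 ≤ ‖y - p‖^2) :
    dist y a ≤ dist y p := by
  rw [dist_eq_norm, dist_eq_norm]
  nlinarith [norm_nonneg (y - a), norm_nonneg (y - p)]

lemma dist_eq_of_sq_eq {y a p : Plane} (h : ‖y - a‖^2 = ‖y - p‖^2) :
    dist y a = dist y p :=
  le_antisymm (dist_le_of_sq_le h.le) (dist_le_of_sq_le h.ge)

lemma sq_le_of_dist_le {y a p : Plane} (h : dist y a ≤ dist y p) :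
    ‖y - a‖^2 ≤ ‖y - p‖^2 := by
  rw [dist_eq_norm, dist_eq_norm] at h
  nlinarith [norm_nonneg (y - a), norm_nonneg (y - p)]

lemma sq_lt_of_dist_lt {y a p : Plane} (h : dist y a < dist y p) :
    ‖y - a‖^2 < ‖y - p‖^2 := by
  rw [dist_eq_norm, dist_eq_norm] at h
  nlinarith [norm_nonneg (y - a), norm_nonneg (y - p)]

lemma three_distinct {s : Set Plane} (hs : s.Finite) (h : 3 ≤ s.encard) :
    ∃ a b c, a ∈ s ∧ b ∈ s ∧ c ∈ s ∧ a ≠ b ∧ a ≠ c ∧ b ≠ c := by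
  classical
  have hcard : (3:ℕ) ≤ hs.toFinset.card := by
    rw [hs.encard_eq_coe_toFinset_card] at h
    exact_mod_cast h
  have hpos : 0 < hs.toFinset.card := by omega
  obtain ⟨a, ha⟩ := Finset.card_pos.mp hpos
  have h2 : 1 < (hs.toFinset.erase a).card := by
    rw [Finset.card_erase_of_mem ha]; omega
  obtain ⟨b, c, hb, hc, hbc⟩ := Finset.one_lt_card_iff.mp h2
  refine ⟨a, b, c, ?_, ?_, ?_, ?_, ?_, hbc⟩
  · exact hs.mem_toFinset.mp ha
  · exact hs.mem_toFinset.mp (Finset.mem_of_mem_erase hb)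
  · exact hs.mem_toFinset.mp (Finset.mem_of_mem_erase hc)
  · exact fun e => (Finset.mem_erase.mp hb).1 e.symm
  · exact fun e => (Finset.mem_erase.mp hc).1 e.symm

lemma encard_ge_three {s : Set Plane} {a b c : Plane} (ha : a ∈ s) (hb : b ∈ s)
    (hc : c ∈ s) (hab : a ≠ b) (hac : a ≠ c) (hbc : b ≠ c) : 3 ≤ s.encard := by
  have h : ({a, b, c} : Set Plane).encard = 3 := by
    rw [Set.encard_insert_of_notMem (by simp [hab, hac]),
        Set.encard_insert_of_notMem (by simp [hbc]), Set.encard_singleton]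
    rfl
  calc (3 : ℕ∞) = ({a,b,c} : Set Plane).encard := h.symm
    _ ≤ s.encard := Set.encard_mono (by intro x hx; rcases hx with h|h|h <;> simp_all)

lemma mem_vtx_of {P : Set Plane} {y a b c : Plane} (ha : a ∈ P) (hb : b ∈ P) (hc : c ∈ P)
    (hab : a ≠ b) (hac : a ≠ c) (hbc : b ≠ c)
    (h1 : dist y b = dist y a) (h2 : dist y c = dist y a)
    (hmin : ∀ p ∈ P, dist y a ≤ dist y p) : y ∈ vtx P := by
  have h : ∀ z, z ∈ P → dist y z = dist y a → z ∈ nearest P y := by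
    intro z hz he
    exact ⟨hz, fun q hq => he ▸ hmin q hq⟩
  exact encard_ge_three (h a ha rfl) (h b hb h1) (h c hc h2) hab hac hbc

lemma move_identity (y v p a : Plane) (t : ℝ) :
    ‖y + t • v - p‖^2 - ‖y + t • v - a‖^2
      = (‖y - p‖^2 - ‖y - a‖^2) - 2 * t * ⟪v, p - a⟫ := by
  have h1 : y + t • v - p = (y - p) + t • v := by abel
  have h2 : y + t • v - a = (y - a) + t • v := by abel
  rw [h1, h2, norm_add_sq_real, norm_add_sq_real]
  simp [real_inner_smul_right, inner_sub_left, inner_sub_right]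
  rw [real_inner_comm p v, real_inner_comm a v]
  ring

/-- Move the center of an empty circle through `a` in direction `v` until a
new point lands on the circle. -/
lemma advance {P : Set Plane} (hP : P.Finite) {y a v : Plane} (ha : a ∈ P)
    (hmin : ∀ p ∈ P, dist y a ≤ dist y p)
    (hout : ∀ p ∈ P, 0 < ⟪v, p - a⟫ → dist y a < dist y p)
    (hne : ∃ p ∈ P, 0 < ⟪v, p - a⟫) :
    ∃ t : ℝ, 0 < t ∧ ∃ p' ∈ P, 0 < ⟪v, p' - a⟫ ∧
      (∀ p ∈ P, dist (y + t • v) a ≤ dist (y + t • v) p) ∧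
      dist (y + t • v) p' = dist (y + t • v) a ∧
      (∀ p, ⟪v, p - a⟫ = 0 → dist y p = dist y a →
        dist (y + t • v) p = dist (y + t • v) a) := by
  classical
  set S : Set Plane := {p ∈ P | 0 < ⟪v, p - a⟫} with hS
  have hSfin : S.Finite := hP.subset (fun p hp => hp.1)
  have hSne : S.Nonempty := by
    obtain ⟨p, hp, hp'⟩ := hne
    exact ⟨p, hp, hp'⟩
  set f : Plane → ℝ := fun p => (‖y - p‖^2 - ‖y - a‖^2) / (2 * ⟪v, p - a⟫) with hf
  obtain ⟨p', hp'S, hp'min⟩ := Set.exists_min_image S f hSfin hSne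
  set t := f p' with ht
  have hfpos : ∀ p ∈ S, 0 < f p := by
    intro p hp
    apply div_pos
    · have h1 := hout p hp.1 hp.2
      have h2 := sq_lt_of_dist_lt h1
      linarith
    · linarith [hp.2]
  have htpos : 0 < t := hfpos p' hp'S
  have key : ∀ p : Plane, ‖y + t • v - p‖^2 - ‖y + t • v - a‖^2
      = (‖y - p‖^2 - ‖y - a‖^2) - 2 * t * ⟪v, p - a⟫ := fun p => move_identity y v p a t
  refine ⟨t, htpos, p', hp'S.1, hp'S.2, ?_, ?_, ?_⟩
  · intro p hp
    apply dist_le_of_sq_le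
    have hbase : 0 ≤ ‖y - p‖^2 - ‖y - a‖^2 := by
      have := sq_le_of_dist_le (hmin p hp)
      linarith
    rcases le_or_gt ⟪v, p - a⟫ 0 with h | h
    · nlinarith [key p]
    · have hpS : p ∈ S := ⟨hp, h⟩
      have hle : t ≤ f p := hp'min p hpS
      have hmul : 2 * t * ⟪v, p - a⟫ ≤ ‖y - p‖^2 - ‖y - a‖^2 := by
        rw [hf] at hle
        have h2 : 0 < 2 * ⟪v, p - a⟫ := by linarith
        calc 2 * t * ⟪v, p - a⟫ = t * (2 * ⟪v, p - a⟫) := by ring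
          _ ≤ ((‖y - p‖^2 - ‖y - a‖^2) / (2 * ⟪v, p - a⟫)) * (2 * ⟪v, p - a⟫) := by
              apply mul_le_mul_of_nonneg_right hle h2.le
          _ = ‖y - p‖^2 - ‖y - a‖^2 := div_mul_cancel₀ _ h2.ne'
      linarith [key p]
  · apply (dist_eq_of_sq_eq ?_).symm
    have h2 : 2 * ⟪v, p' - a⟫ ≠ 0 := by linarith [hp'S.2]
    have heq : 2 * t * ⟪v, p' - a⟫ = ‖y - p'‖^2 - ‖y - a‖^2 := by
      have hc : t * (2 * ⟪v, p' - a⟫) = ‖y - p'‖^2 - ‖y - a‖^2 := div_mul_cancel₀ _ h2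
      linear_combination hc
    have := key p'
    linarith
  · intro p hinner hdist
    apply (dist_eq_of_sq_eq ?_).symm
    have hb : ‖y - p‖^2 = ‖y - a‖^2 := by
      rw [dist_eq_norm, dist_eq_norm] at hdist
      rw [hdist]
    have := key p
    rw [hinner] at this
    linarith

/-- Three concyclic points whose distances to a second point `x` agree force `x`
to be the center. -/
lemma center_unique {c x : Plane} {r : ℝ} {p₁ p₂ p₃ : Plane}
    (h12 : p₁ ≠ p₂) (h13 : p₁ ≠ p₃) (h23 : p₂ ≠ p₃)
    (hc : dist p₁ c = r) (hc2 : dist p₂ c = r) (hc3 : dist p₃ c = r)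
    (hx : dist p₁ x = dist p₂ x) (hx3 : dist p₁ x = dist p₃ x) :
    x = c := by
  by_contra hne
  have hv : x - c ≠ 0 := sub_ne_zero.mpr hne
  have hu : p₂ - p₁ ≠ 0 := sub_ne_zero.mpr (Ne.symm h12)
  have ho1 : ⟪p₂ - p₁, x - c⟫ = 0 := orth_of_two_dists (hc2.trans hc.symm) hx.symm
  have ho2 : ⟪p₃ - p₁, x - c⟫ = 0 := orth_of_two_dists (hc3.trans hc.symm) hx3.symm
  obtain ⟨t, htw⟩ := dep_of_orth hv hu ho1 ho2
  have h1 : ‖(p₁ - c) + (p₂ - p₁)‖ = ‖p₁ - c‖ := by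
    have he : (p₁ - c) + (p₂ - p₁) = p₂ - c := by abel
    rw [he, ← dist_eq_norm, ← dist_eq_norm, hc, hc2]
  have h2 : ‖(p₁ - c) + t • (p₂ - p₁)‖ = ‖p₁ - c‖ := by
    rw [← htw]
    have he : (p₁ - c) + (p₃ - p₁) = p₃ - c := by abel
    rw [he, ← dist_eq_norm, ← dist_eq_norm, hc, hc3]
  rcases circ_collinear hu t h1 h2 with h | h
  · rw [h, zero_smul] at htw
    exact h13 (sub_eq_zero.mp htw).symm
  · rw [h, one_smul] at htw
    exact h23 (sub_left_inj.mp htw).symm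

noncomputable def perpv (e : Plane) : Plane :=
  (WithLp.equiv 2 (Fin 2 → ℝ)).symm ![-(e 1), e 0]

@[simp] lemma perpv_zero (e : Plane) : perpv e 0 = -(e 1) := rfl
@[simp] lemma perpv_one (e : Plane) : perpv e 1 = e 0 := rfl

lemma perpv_orth (e : Plane) : ⟪perpv e, e⟫ = 0 := by
  rw [inner_coords]; simp; ring

lemma perpv_ne (e : Plane) (he : e ≠ 0) : perpv e ≠ 0 := by
  intro h
  apply he
  ext i
  have h0 : perpv e 0 = 0 := by rw [h]; rfl
  have h1 : perpv e 1 = 0 := by rw [h]; rfl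
  simp at h0 h1
  fin_cases i <;> simp [h0, h1]

/-- If some point of `P` is not among the nearest generators of a vertex `x`,
then there is another vertex. -/
lemma exists_other_vtx {P : Set Plane} (hP : P.Finite) {x : Plane}
    (hx : x ∈ vtx P) {q : Plane} (hq : q ∈ P) (hqn : q ∉ nearest P x) :
    ∃ z ∈ vtx P, z ≠ x := by
  classical
  set N := nearest P x with hN
  have hN3 : 3 ≤ N.encard := hx
  have hNP : N ⊆ P := fun p hp => hp.1
  have hNfin : N.Finite := hP.subset hNP
  obtain ⟨a₁, b₁, c₁, ha₁, hb₁, hc₁, hab₁, hac₁, hbc₁⟩ := three_distinct hNfin hN3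
  have hdeq : ∀ p ∈ N, dist x p = dist x a₁ := fun p hp =>
    le_antisymm (hp.2 a₁ ha₁.1) (ha₁.2 p hp.1)
  set d := dist x a₁ with hd
  have hdmin : ∀ p ∈ P, d ≤ dist x p := fun p hp => ha₁.2 p hp
  have hmemN : ∀ p ∈ P, dist x p = d → p ∈ N := by
    intro p hp hpd
    exact ⟨hp, fun q' hq' => by rw [hpd]; exact hdmin q' hq'⟩
  have hdq : d < dist x q := by
    rcases lt_or_ge d (dist x q) with h | h
    · exact h
    · exact absurd (hmemN q hq (le_antisymm h (hdmin q hq))) hqn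
  have hd0 : 0 < d := by
    rcases lt_or_ge 0 d with h | h
    · exact h
    · exfalso
      have hd0' : d = 0 := le_antisymm h dist_nonneg
      have hsub : N ⊆ {x} := by
        intro p hp
        have h1 := hdeq p hp
        rw [hd0'] at h1
        have := dist_eq_zero.mp h1
        simp [this.symm]
      have hle := Set.encard_mono hsub
      rw [Set.encard_singleton] at hle
      have := hN3.trans hle
      norm_num at this
  have hqx : q ≠ x := by
    intro h
    rw [h] at hdq
    simp at hdq
    linarith
  -- Stage 1 : move towards q keeping a (a maximizer in direction w) on the circle
  set w := q - x with hw
  have hwne : w ≠ 0 := sub_ne_zero.mpr hqx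
  obtain ⟨a, haN, hamax⟩ := Set.exists_max_image N (fun p => ⟪w, p⟫) hNfin ⟨a₁, ha₁⟩
  have haP : a ∈ P := hNP haN
  have hada : dist x a = d := hdeq a haN
  have hmax : ∀ p ∈ N, ⟪w, p - a⟫ ≤ 0 := by
    intro p hp
    rw [inner_sub_right]
    have := hamax p hp
    linarith
  have hqpos : 0 < ⟪w, q - a⟫ := by
    have h1 : q - a = (q - x) - (a - x) := by abel
    rw [h1, inner_sub_right, ← hw]
    have h2 : ⟪w, w⟫ = ‖w‖^2 := real_inner_self_eq_norm_sq w
    have h3 : ⟪w, a - x⟫ ≤ ‖w‖ * ‖a - x‖ := real_inner_le_norm w (a - x)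
    have h4 : ‖a - x‖ = d := by rw [← dist_eq_norm, dist_comm]; exact hada
    have h5 : ‖w‖ = dist x q := by rw [hw, ← dist_eq_norm, dist_comm]
    nlinarith [hd0, hdq]
  have hout : ∀ p ∈ P, 0 < ⟪w, p - a⟫ → dist x a < dist x p := by
    intro p hp hpos
    rw [hada]
    rcases lt_or_ge d (dist x p) with h | h
    · exact h
    · exfalso
      have hpN : p ∈ N := hmemN p hp (le_antisymm h (hdmin p hp))
      linarith [hmax p hpN]
  have hminx : ∀ p ∈ P, dist x a ≤ dist x p := by
    intro p hp; rw [hada]; exact hdmin p hp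
  obtain ⟨t₁, ht₁, p₁, hp₁P, hp₁pos, hminy, heqy, hkeepy⟩ :=
    advance hP haP hminx hout ⟨q, hq, hqpos⟩
  set y := x + t₁ • w with hy
  have hp₁N : p₁ ∉ N := fun h => absurd hp₁pos (not_lt.mpr (hmax p₁ h))
  have hp₁a : p₁ ≠ a := fun h => hp₁N (h ▸ haN)
  have hyx : y ≠ x := by
    intro h
    rw [hy, add_eq_left] at h
    rcases smul_eq_zero.mp h with h' | h'
    · linarith
    · exact hwne h'
  by_cases hcase : 3 ≤ (nearest P y).encard
  · exact ⟨y, hcase, hyx⟩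
  -- Stage 2
  have hstrict : ∀ p ∈ P, p ≠ a → p ≠ p₁ → dist y a < dist y p := by
    intro p hp hpa hpp₁
    rcases lt_or_ge (dist y a) (dist y p) with h | h
    · exact h
    · exfalso
      apply hcase
      have hpe : dist y p = dist y a := le_antisymm h (hminy p hp)
      exact encard_ge_three (s := nearest P y)
        ⟨haP, fun q' hq' => hminy q' hq'⟩
        ⟨hp₁P, fun q' hq' => heqy ▸ hminy q' hq'⟩
        ⟨hp, fun q' hq' => hpe ▸ hminy q' hq'⟩
        (Ne.symm hp₁a) (Ne.symm hpa) (Ne.symm hpp₁)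
  set e := p₁ - a with he
  have hene : e ≠ 0 := sub_ne_zero.mpr hp₁a
  obtain ⟨u₁, u₂, hu₁N, hu₂N, hu₁a, hu₂a, hu₁₂⟩ :
      ∃ u₁ u₂, u₁ ∈ N ∧ u₂ ∈ N ∧ u₁ ≠ a ∧ u₂ ≠ a ∧ u₁ ≠ u₂ := by
    by_cases h1 : a₁ = a
    · exact ⟨b₁, c₁, hb₁, hc₁, by rw [← h1]; exact fun hh => hab₁ hh.symm,
        by rw [← h1]; exact fun hh => hac₁ hh.symm, hbc₁⟩
    · by_cases h2 : b₁ = a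
      · exact ⟨a₁, c₁, ha₁, hc₁, h1,
          by rw [← h2]; exact fun hh => hbc₁ hh.symm, hac₁⟩
      · exact ⟨a₁, b₁, ha₁, hb₁, h1, h2, hab₁⟩
  obtain ⟨p', hp'N, hp'ne⟩ : ∃ p', p' ∈ N ∧ ⟪perpv e, p' - a⟫ ≠ 0 := by
    by_cases hcon1 : ⟪perpv e, u₁ - a⟫ = 0
    · by_cases hcon2 : ⟪perpv e, u₂ - a⟫ = 0
      · exfalso
        obtain ⟨t, htw⟩ := dep_of_orth (perpv_ne e hene) (sub_ne_zero.mpr hu₁a)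
          (by rw [real_inner_comm]; exact hcon1) (by rw [real_inner_comm]; exact hcon2)
        have hA1 : ‖(a - x) + (u₁ - a)‖ = ‖a - x‖ := by
          have he1 : (a - x) + (u₁ - a) = u₁ - x := by abel
          rw [he1, ← dist_eq_norm, ← dist_eq_norm, dist_comm u₁ x, dist_comm a x,
            hdeq u₁ hu₁N, hada]
        have hA2 : ‖(a - x) + t • (u₁ - a)‖ = ‖a - x‖ := by
          rw [← htw]
          have he2 : (a - x) + (u₂ - a) = u₂ - x := by abel
          rw [he2, ← dist_eq_norm, ← dist_eq_norm, dist_comm u₂ x, dist_comm a x,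
            hdeq u₂ hu₂N, hada]
        rcases circ_collinear (sub_ne_zero.mpr hu₁a) t hA1 hA2 with h | h
        · rw [h, zero_smul] at htw
          exact hu₂a (sub_eq_zero.mp htw)
        · rw [h, one_smul] at htw
          exact hu₁₂ (sub_left_inj.mp htw).symm
      · exact ⟨u₂, hu₂N, hcon2⟩
    · exact ⟨u₁, hu₁N, hcon1⟩
  have hp'P : p' ∈ P := hNP hp'N
  set v₂ := if 0 < ⟪perpv e, p' - a⟫ then perpv e else -perpv e with hv₂
  have hv₂e : ⟪v₂, e⟫ = 0 := by
    rw [hv₂]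
    split
    · exact perpv_orth e
    · rw [inner_neg_left, perpv_orth e, neg_zero]
  have hv₂pos : 0 < ⟪v₂, p' - a⟫ := by
    rw [hv₂]
    split
    · next h => exact h
    · next h =>
        rw [inner_neg_left]
        rcases hp'ne.lt_or_gt with h' | h'
        · linarith
        · exact absurd h' h
  have hp'a : p' ≠ a := by
    intro h
    apply hp'ne
    rw [h, sub_self, inner_zero_right]
  have hp'p₁ : p' ≠ p₁ := fun h => hp₁N (h ▸ hp'N)
  have hout₂ : ∀ p ∈ P, 0 < ⟪v₂, p - a⟫ → dist y a < dist y p := by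
    intro p hp hpos
    apply hstrict p hp
    · intro h
      rw [h, sub_self, inner_zero_right] at hpos
      linarith
    · intro h
      rw [h] at hpos
      have : ⟪v₂, p₁ - a⟫ = 0 := hv₂e
      linarith
  obtain ⟨t₂, ht₂, p₂, hp₂P, hp₂pos, hminz, heqz, hkeepz⟩ :=
    advance hP haP hminy hout₂ ⟨p', hp'P, hv₂pos⟩
  set z := y + t₂ • v₂ with hz
  have hzp₁ : dist z p₁ = dist z a := hkeepz p₁ hv₂e heqy
  have hp₂a : p₂ ≠ a := by
    intro h
    rw [h, sub_self, inner_zero_right] at hp₂pos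
    linarith
  have hp₂p₁ : p₂ ≠ p₁ := by
    intro h
    rw [h] at hp₂pos
    have : ⟪v₂, p₁ - a⟫ = 0 := hv₂e
    linarith
  have hzvtx : z ∈ vtx P :=
    mem_vtx_of haP hp₁P hp₂P (Ne.symm hp₁a) (Ne.symm hp₂a) (Ne.symm hp₂p₁)
      hzp₁ heqz hminz
  have hzx : z ≠ x := by
    intro hzxe
    apply hp₁N
    apply hmemN p₁ hp₁P
    have h1 : dist z p₁ = dist z a := hzp₁
    rw [hzxe] at h1
    rw [h1, hada]
  exact ⟨z, hzvtx, hzx⟩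

lemma vtx_eq_center {P : Set Plane} (hP : P.Finite) (h3 : 3 ≤ P.ncard)
    {c : Plane} {r : ℝ} (hcirc : ∀ p ∈ P, dist p c = r) :
    vtx P = {c} := by
  have hPenc : 3 ≤ P.encard := by
    rw [hP.encard_eq_coe_toFinset_card]
    rw [Set.ncard_eq_toFinset_card P hP] at h3
    exact_mod_cast h3
  ext z
  simp only [Set.mem_singleton_iff]
  constructor
  · intro hz
    have hzfin : (nearest P z).Finite := hP.subset (fun p hp => hp.1)
    obtain ⟨p₁, p₂, p₃, h1, h2, h3', h12, h13, h23⟩ := three_distinct hzfin hz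
    have hd12 : dist p₁ z = dist p₂ z := by
      rw [dist_comm, dist_comm p₂ z]
      exact le_antisymm (h1.2 p₂ h2.1) (h2.2 p₁ h1.1)
    have hd13 : dist p₁ z = dist p₃ z := by
      rw [dist_comm, dist_comm p₃ z]
      exact le_antisymm (h1.2 p₃ h3'.1) (h3'.2 p₁ h1.1)
    exact center_unique h12 h13 h23 (hcirc p₁ h1.1) (hcirc p₂ h2.1) (hcirc p₃ h3'.1)
      hd12 hd13
  · intro hz
    subst hz
    have hne : nearest P z = P := by
      ext p
      constructor
      · exact fun hp => hp.1
      · intro hp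
        refine ⟨hp, fun q hq => ?_⟩
        rw [dist_comm, dist_comm z q, hcirc p hp, hcirc q hq]
    show 3 ≤ (nearest P z).encard
    rw [hne]
    exact hPenc

lemma vtx_singleton_empty (c : Plane) : vtx ({c} : Set Plane) = ∅ := by
  ext z
  simp only [Set.mem_empty_iff_false, iff_false]
  intro hz
  have hsub : nearest ({c} : Set Plane) z ⊆ {c} := fun p hp => hp.1
  have := (Set.encard_mono hsub).trans_lt (by rw [Set.encard_singleton]; norm_num :
    ({c} : Set Plane).encard < 3)
  exact absurd hz (not_le.mpr this)

lemma vtx_empty : vtx (∅ : Set Plane) = ∅ := by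
  ext z
  simp only [Set.mem_empty_iff_false, iff_false]
  intro hz
  have hsub : nearest (∅ : Set Plane) z ⊆ ∅ := fun p hp => hp.1
  have h0 := Set.encard_mono hsub
  rw [Set.encard_empty] at h0
  have := hz.trans h0
  norm_num at this

lemma vtx_iter_empty (k : ℕ) : vtx^[k] (∅ : Set Plane) = ∅ := by
  induction k with
  | zero => rfl
  | succ n ih => rw [Function.iterate_succ_apply, vtx_empty, ih]

end Aux

theorem cocircular_iff_vtx_singleton (P : Set Plane) (hP : P.Finite)
    (h3 : 3 ≤ P.ncard) :
    ((∃ c : Plane, ∃ r : ℝ, 0 < r ∧ ∀ p ∈ P, dist p c = r) ↔ (vtx P).ncard = 1) ∧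
    (∀ c : Plane, ∀ r : ℝ, 0 < r → (∀ p ∈ P, dist p c = r) → vtx P = {c}) ∧
    ((∃ c : Plane, ∃ r : ℝ, 0 < r ∧ ∀ p ∈ P, dist p c = r) →
      ∀ n : ℕ, 1 < n → vtx^[n] P = ∅) := by
  refine ⟨⟨?_, ?_⟩, ?_, ?_⟩
  · rintro ⟨c, r, _, hc⟩
    rw [vtx_eq_center hP h3 hc]
    exact Set.ncard_singleton c
  · intro h1
    obtain ⟨x, hx⟩ := Set.ncard_eq_one.mp h1
    have hxv : x ∈ vtx P := hx ▸ Set.mem_singleton x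
    have hall : ∀ p ∈ P, p ∈ nearest P x := by
      intro p hp
      by_contra hpn
      obtain ⟨z, hzv, hzx⟩ := exists_other_vtx hP hxv hp hpn
      rw [hx] at hzv
      exact hzx hzv
    obtain ⟨p₀, hp₀⟩ : P.Nonempty := by
      rcases Set.eq_empty_or_nonempty P with h | h
      · rw [h] at h3; simp at h3
      · exact h
    have hdeq : ∀ p ∈ P, dist x p = dist x p₀ := fun p hp =>
      le_antisymm ((hall p hp).2 p₀ hp₀) ((hall p₀ hp₀).2 p hp)
    refine ⟨x, dist x p₀, ?_, fun p hp => by rw [dist_comm]; exact hdeq p hp⟩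
    rcases lt_or_ge 0 (dist x p₀) with h | h
    · exact h
    · exfalso
      have h0 : dist x p₀ = 0 := le_antisymm h dist_nonneg
      have hsub : P ⊆ {x} := by
        intro p hp
        have h1 := hdeq p hp
        rw [h0] at h1
        have := dist_eq_zero.mp h1
        simp [this.symm]
      have := Set.ncard_le_ncard hsub (Set.finite_singleton x)
      rw [Set.ncard_singleton] at this
      omega
  · intro c r _ hc
    exact vtx_eq_center hP h3 hc
  · rintro ⟨c, r, hr, hc⟩ n hn
    have h1 : vtx P = {c} := vtx_eq_center hP h3 hc
    obtain ⟨k, rfl⟩ : ∃ k, n = k + 2 := ⟨n - 2, by omega⟩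
    rw [show k + 2 = k + 1 + 1 by omega]
    rw [Function.iterate_succ_apply, h1, Function.iterate_succ_apply,
      vtx_singleton_empty, vtx_iter_empty]
end

section
/- Let P be a finite, non-collinear subset of the Euclidean plane ℝ², and let p, p' ∈ P be distinct points such that V_P(p) ∩ V_P(p') contains more than one point (i.e., e_{p,p'} is a Voronoi edge). Then V_P(p) ∩ V_P(p') is unbounded if and only if p and p' are neighbors on the boundary of P; equivalently, V_P(p) ∩ V_P(p') is bounded if and only if p and p' are not neighbors on the boundary of P. -/
open Set

/-- `p` and `p'` are neighbors on the boundary of `P`. -/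
def Neighbors (P : Set Plane) (p p' : Plane) : Prop :=
  p ≠ p' ∧ p ∈ Bd P ∧ p' ∈ Bd P ∧ segment ℝ p p' ⊆ frontier (convexHull ℝ P) ∧
    ∀ q ∈ P \ {p, p'}, q ∉ segment ℝ p p'

open scoped RealInnerProductSpace

noncomputable section VoronoiAux

instance : Fact (Module.finrank ℝ Plane = 2) := ⟨finrank_euclideanSpace_fin⟩

def ori : Orientation ℝ Plane (Fin 2) :=
  Module.Basis.orientation (Module.finBasisOfFinrankEq ℝ Plane finrank_euclideanSpace_fin)

local notation "J" => ori.rightAngleRotation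

lemma perp_span {w : Plane} (hw : w ≠ 0) {u : Plane} (hu : ⟪w, u⟫ = 0) :
    ∃ t : ℝ, u = t • J w := by
  have hrepr := (ori.basisRightAngleRotation w hw).sum_repr u
  set a : ℝ := (ori.basisRightAngleRotation w hw).repr u 0 with ha
  set b : ℝ := (ori.basisRightAngleRotation w hw).repr u 1 with hb
  have hu' : u = a • w + b • J w := by
    rw [← hrepr]
    simp [Fin.sum_univ_succ, Orientation.coe_basisRightAngleRotation]
    rfl
  have key : ⟪w, u⟫ = a * ‖w‖^2 + b * ⟪w, J w⟫ := by
    rw [hu', inner_add_right, real_inner_smul_right, real_inner_smul_right,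
      real_inner_self_eq_norm_sq]
  have hJ : ⟪w, J w⟫ = 0 := by
    rw [Orientation.inner_rightAngleRotation_right]; simp
  have ha0 : a = 0 := by
    have hw2 : (0:ℝ) < ‖w‖^2 := by
      have := norm_pos_iff.mpr hw; positivity
    rw [hu, hJ, mul_zero, add_zero] at key
    nlinarith
  exact ⟨b, by rw [hu', ha0]; simp⟩

lemma dist_le_iff_inner (x p q : Plane) :
    dist x p ≤ dist x q ↔ 2 * ⟪q - p, x⟫ ≤ ‖q‖^2 - ‖p‖^2 := by
  have hp2 : ‖x - p‖^2 = ‖x‖^2 - 2*⟪x,p⟫ + ‖p‖^2 := norm_sub_sq_real x p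
  have hq2 : ‖x - q‖^2 = ‖x‖^2 - 2*⟪x,q⟫ + ‖q‖^2 := norm_sub_sq_real x q
  have hqp : ⟪q - p, x⟫ = ⟪x,q⟫ - ⟪x,p⟫ := by
    rw [inner_sub_left, real_inner_comm q x, real_inner_comm p x]
  rw [dist_eq_norm, dist_eq_norm]
  constructor
  · intro h
    nlinarith [norm_nonneg (x-p), norm_nonneg (x-q)]
  · intro h
    nlinarith [norm_nonneg (x-p), norm_nonneg (x-q)]

lemma convex_cell (P : Set Plane) (p : Plane) : Convex ℝ (cell P p) := by
  intro x hx y hy a b ha hb hab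
  intro q hq
  have h1 := (dist_le_iff_inner x p q).mp (hx q hq)
  have h2 := (dist_le_iff_inner y p q).mp (hy q hq)
  have hin : ⟪q - p, a • x + b • y⟫ = a * ⟪q - p, x⟫ + b * ⟪q - p, y⟫ := by
    rw [inner_add_right, real_inner_smul_right, real_inner_smul_right]
  refine (dist_le_iff_inner _ _ _).mpr ?_
  rw [hin]
  nlinarith

lemma halfspace_convex (d : Plane) (c : ℝ) : Convex ℝ {y : Plane | ⟪d, y⟫ ≤ c} := by
  intro x hx y hy a b ha hb hab
  simp only [mem_setOf_eq] at hx hy ⊢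
  have hin : ⟪d, a • x + b • y⟫ = a * ⟪d, x⟫ + b * ⟪d, y⟫ := by
    rw [inner_add_right, real_inner_smul_right, real_inner_smul_right]
  calc ⟪d, a • x + b • y⟫ = a * ⟪d, x⟫ + b * ⟪d, y⟫ := hin
    _ ≤ a * c + b * c :=
        add_le_add (mul_le_mul_of_nonneg_left hx ha) (mul_le_mul_of_nonneg_left hy hb)
    _ = c := by rw [← add_mul, hab, one_mul]

lemma linear_nonpos {A B C : ℝ} (h : ∀ t : ℝ, 0 ≤ t → A + t * B ≤ C) : B ≤ 0 := by
  by_contra hB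
  push_neg at hB
  have ht : (0:ℝ) ≤ max 0 ((C - A + 1)/B) := le_max_left _ _
  have h2 := h _ ht
  have h3 : (C - A + 1)/B ≤ max 0 ((C - A + 1)/B) := le_max_right _ _
  have h4 : (C - A + 1)/B * B ≤ max 0 ((C - A + 1)/B) * B :=
    mul_le_mul_of_nonneg_right h3 hB.le
  rw [div_mul_cancel₀ _ hB.ne'] at h4
  nlinarith

lemma mem_frontier_of_inner_eq {d : Plane} (hd : d ≠ 0) {c : ℝ} {S : Set Plane}
    (hS : IsClosed S) (hsub : ∀ y ∈ S, ⟪d, y⟫ ≤ c) {x : Plane} (hx : x ∈ S)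
    (hxc : ⟪d, x⟫ = c) : x ∈ frontier S := by
  refine ⟨by rw [hS.closure_eq]; exact hx, ?_⟩
  intro hint
  obtain ⟨ε, hε, hball⟩ := Metric.isOpen_iff.mp isOpen_interior x hint
  have hdn : (0:ℝ) < ‖d‖ := norm_pos_iff.mpr hd
  set y := x + (ε / (2*‖d‖)) • d with hy
  have hyb : y ∈ Metric.ball x ε := by
    rw [Metric.mem_ball, dist_eq_norm, hy]
    have : x + (ε / (2*‖d‖)) • d - x = (ε / (2*‖d‖)) • d := by abel
    rw [this, norm_smul, Real.norm_eq_abs, abs_of_pos (by positivity)]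
    rw [div_mul_eq_mul_div, mul_comm]
    rw [div_lt_iff₀ (by positivity)]
    nlinarith
  have hyS := hsub y (interior_subset (hball hyb))
  have : ⟪d, y⟫ = c + (ε / (2*‖d‖)) * ‖d‖^2 := by
    rw [hy, inner_add_right, real_inner_smul_right, real_inner_self_eq_norm_sq, hxc]
  rw [this] at hyS
  have : (0:ℝ) < (ε / (2*‖d‖)) * ‖d‖^2 := by positivity
  linarith

lemma closer_of_mem_segment {x p p' q : Plane} (hne : p ≠ p') (hr : dist x p = dist x p')
    (hq : q ∈ segment ℝ p p') (hqp : q ≠ p) (hqp' : q ≠ p') : dist x q < dist x p := by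
  obtain ⟨a, b, ha, hb, hab, rfl⟩ := hq
  have ha' : a ≠ 0 := by
    rintro rfl
    apply hqp'
    rw [zero_add] at hab
    rw [hab, zero_smul, zero_add, one_smul]
  have hb' : b ≠ 0 := by
    rintro rfl
    apply hqp
    rw [add_zero] at hab
    rw [hab, zero_smul, add_zero, one_smul]
  have ha0 : 0 < a := lt_of_le_of_ne ha (Ne.symm ha')
  have hb0 : 0 < b := lt_of_le_of_ne hb (Ne.symm hb')
  set u := x - p with hu
  set v := x - p' with hv
  have hxq : x - (a • p + b • p') = a • u + b • v := by
    have hx1 : x = a • x + b • x := by rw [← add_smul, hab, one_smul]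
    rw [hu, hv, smul_sub, smul_sub]
    nth_rewrite 1 [hx1]
    abel
  have huv : 0 < ‖u - v‖ := by
    rw [hu, hv]
    have h9 : x - p - (x - p') = p' - p := by abel
    rw [h9]
    exact norm_pos_iff.mpr (sub_ne_zero.mpr (Ne.symm hne))
  have hnorm : ‖u‖ = ‖v‖ := by
    rw [hu, hv, ← dist_eq_norm, ← dist_eq_norm]; exact hr
  have hnorm2 : ‖u‖^2 = ‖v‖^2 := by rw [hnorm]
  have hinlt : ⟪u, v⟫ < ‖u‖^2 := by
    have hexp : ‖u - v‖^2 = ‖u‖^2 - 2*⟪u,v⟫ + ‖v‖^2 := norm_sub_sq_real u v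
    linarith [pow_pos huv 2]
  have hexp2 : ‖a • u + b • v‖^2 = a^2*‖u‖^2 + 2*(a*b)*⟪u,v⟫ + b^2*‖v‖^2 := by
    rw [norm_add_sq_real, norm_smul, norm_smul, real_inner_smul_left, real_inner_smul_right,
      Real.norm_eq_abs, Real.norm_eq_abs, abs_of_pos ha0, abs_of_pos hb0]
    ring
  rw [dist_eq_norm, dist_eq_norm, hxq, ← hu]
  have key : ‖a • u + b • v‖^2 = ‖u‖^2 - 2*(a*b)*(‖u‖^2 - ⟪u,v⟫) := by
    rw [hexp2, ← hnorm2]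
    linear_combination (a + b + 1) * ‖u‖^2 * hab
  have hsq : ‖a • u + b • v‖^2 < ‖u‖^2 := by
    rw [key]
    linarith [mul_pos (mul_pos ha0 hb0) (sub_pos.mpr hinlt)]
  by_contra hcon
  push_neg at hcon
  nlinarith [norm_nonneg u]

lemma ray_neighbors (P : Set Plane) (hP : P.Finite) {p p' : Plane}
    (hp : p ∈ P) (hp' : p' ∈ P) (hne : p ≠ p') (x₀ d : Plane) (hd : d ≠ 0)
    (hray : ∀ t : ℝ, 0 ≤ t → x₀ + t • d ∈ cell P p ∩ cell P p') :
    Neighbors P p p' := by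
  have hsup : ∀ q ∈ P, ⟪d, q⟫ ≤ ⟪d, p⟫ ∧ ⟪d, q⟫ ≤ ⟪d, p'⟫ := by
    intro q hq
    have key : ∀ r : Plane, (∀ t : ℝ, 0 ≤ t → x₀ + t • d ∈ cell P r) → ⟪d, q⟫ ≤ ⟪d, r⟫ := by
      intro r hr
      have hAll : ∀ t : ℝ, 0 ≤ t → 2*⟪q - r, x₀⟫ + t * (2*⟪q - r, d⟫) ≤ ‖q‖^2 - ‖r‖^2 := by
        intro t ht
        have := (dist_le_iff_inner (x₀ + t • d) r q).mp ((hr t ht) q hq)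
        have hexp : ⟪q - r, x₀ + t • d⟫ = ⟪q - r, x₀⟫ + t * ⟪q - r, d⟫ := by
          rw [inner_add_right, real_inner_smul_right]
        nlinarith
      have := linear_nonpos hAll
      have h2 : ⟪q - r, d⟫ = ⟪d, q⟫ - ⟪d, r⟫ := by
        rw [inner_sub_left, real_inner_comm q d, real_inner_comm r d]
      linarith
    exact ⟨key p (fun t ht => (hray t ht).1), key p' (fun t ht => (hray t ht).2)⟩
  have heq : ⟪d, p⟫ = ⟪d, p'⟫ := le_antisymm (hsup p hp).2 (hsup p' hp').1
  set c := ⟪d, p⟫ with hc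
  have hhull : ∀ y ∈ convexHull ℝ P, ⟪d, y⟫ ≤ c :=
    fun y hy => convexHull_min (fun q hq => (hsup q hq).1) (halfspace_convex d c) hy
  have hclosed : IsClosed (convexHull ℝ P) := (hP.isCompact_convexHull (𝕜 := ℝ)).isClosed
  have hfr : ∀ y ∈ convexHull ℝ P, ⟪d, y⟫ = c → y ∈ frontier (convexHull ℝ P) :=
    fun y hy hyc => mem_frontier_of_inner_eq hd hclosed hhull hy hyc
  have hpH : p ∈ convexHull ℝ P := subset_convexHull ℝ P hp
  have hp'H : p' ∈ convexHull ℝ P := subset_convexHull ℝ P hp'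
  refine ⟨hne, ⟨hp, hfr p hpH rfl⟩, ⟨hp', hfr p' hp'H heq.symm⟩, ?_, ?_⟩
  · intro y hy
    refine hfr y ((convex_convexHull ℝ P).segment_subset hpH hp'H hy) ?_
    obtain ⟨a, b, ha, hb, hab, rfl⟩ := hy
    have : ⟪d, a • p + b • p'⟫ = a * ⟪d, p⟫ + b * ⟪d, p'⟫ := by
      rw [inner_add_right, real_inner_smul_right, real_inner_smul_right]
    rw [this, ← heq, ← add_mul, hab, one_mul]
  · rintro q ⟨hqP, hqn⟩ hqseg
    simp only [mem_insert_iff, mem_singleton_iff, not_or] at hqn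
    have hx₀ := hray 0 le_rfl
    rw [zero_smul, add_zero] at hx₀
    have hx0p : dist x₀ p = dist x₀ p' := le_antisymm (hx₀.1 p' hp') (hx₀.2 p hp)
    have h1 := closer_of_mem_segment hne hx0p hqseg hqn.1 hqn.2
    have h2 := hx₀.1 q hqP
    linarith

lemma ray_unbounded {s : Set Plane} (x₀ d : Plane) (T : ℝ) (hd : d ≠ 0)
    (h : ∀ t : ℝ, T ≤ t → x₀ + t • d ∈ s) : ¬ Bornology.IsBounded s := by
  intro hb
  obtain ⟨R, hR⟩ := isBounded_iff_forall_norm_le.mp hb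
  have hdn : (0:ℝ) < ‖d‖ := norm_pos_iff.mpr hd
  set t := max T ((R + ‖x₀‖ + 1)/‖d‖) with hts
  have h1 := hR _ (h t (le_max_left _ _))
  have h2 : ‖t • d‖ ≤ ‖x₀ + t • d‖ + ‖x₀‖ := by
    have := norm_sub_le (x₀ + t • d) x₀
    have h3 : x₀ + t • d - x₀ = t • d := by abel
    rw [h3] at this
    linarith
  have h4 : (R + ‖x₀‖ + 1)/‖d‖ ≤ t := le_max_right _ _
  have h5 : (R + ‖x₀‖ + 1)/‖d‖ * ‖d‖ ≤ t * ‖d‖ := mul_le_mul_of_nonneg_right h4 hdn.le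
  rw [div_mul_cancel₀ _ hdn.ne'] at h5
  have h6 : t * ‖d‖ ≤ |t| * ‖d‖ := mul_le_mul_of_nonneg_right (le_abs_self t) hdn.le
  rw [norm_smul, Real.norm_eq_abs] at h2
  linarith

lemma unbounded_ray {P : Set Plane} {p p' : Plane} (hp : p ∈ P) (hp' : p' ∈ P)
    (hne : p ≠ p') (hub : ¬ Bornology.IsBounded (cell P p ∩ cell P p')) :
    ∃ x₀ d : Plane, d ≠ 0 ∧ ∀ t : ℝ, 0 ≤ t → x₀ + t • d ∈ cell P p ∩ cell P p' := by
  set E := cell P p ∩ cell P p' with hE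
  have hEne : E.Nonempty := by
    by_contra h
    rw [Set.not_nonempty_iff_eq_empty] at h
    exact hub (h ▸ Bornology.isBounded_empty)
  obtain ⟨x₀, hx₀⟩ := hEne
  set w := p' - p with hw'
  have hw : w ≠ 0 := sub_ne_zero.mpr (Ne.symm hne)
  have hbis : ∀ x ∈ E, 2*⟪w, x⟫ = ‖p'‖^2 - ‖p‖^2 := by
    intro x hx
    have h1 := (dist_le_iff_inner x p p').mp (hx.1 p' hp')
    have h2 := (dist_le_iff_inner x p' p).mp (hx.2 p hp)
    have h3 : ⟪p - p', x⟫ = -⟪w, x⟫ := by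
      rw [hw', ← inner_neg_left, neg_sub]
    rw [h3] at h2
    rw [hw']
    linarith
  have hline : ∀ x ∈ E, ∃ t : ℝ, x = x₀ + t • J w := by
    intro x hx
    have h0 : ⟪w, x - x₀⟫ = 0 := by
      rw [inner_sub_right]
      have := hbis x hx
      have := hbis x₀ hx₀
      linarith
    obtain ⟨t, ht⟩ := perp_span hw h0
    exact ⟨t, by rw [← ht]; abel⟩
  have hJw : (J w) ≠ 0 := by
    intro h
    apply hw
    have h2 : ‖(J w : Plane)‖ = ‖w‖ := (ori.rightAngleRotation).norm_map w
    rw [h, norm_zero] at h2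
    exact norm_eq_zero.mp h2.symm
  set S := {t : ℝ | x₀ + t • J w ∈ E} with hS
  have hEconv : Convex ℝ E := (convex_cell P p).inter (convex_cell P p')
  have hconv : Convex ℝ S := by
    intro t₁ h₁ t₂ h₂ a b ha hb hab
    have hmem := hEconv h₁ h₂ ha hb hab
    have hcalc : a • (x₀ + t₁ • J w) + b • (x₀ + t₂ • J w)
        = x₀ + (a * t₁ + b * t₂) • J w := by
      have h1 : a • x₀ + b • x₀ = x₀ := by rw [← add_smul, hab, one_smul]
      rw [smul_add, smul_add, smul_smul, smul_smul, add_smul]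
      conv_rhs => rw [← h1]
      abel
    rw [hcalc] at hmem
    exact hmem
  have h0S : (0:ℝ) ∈ S := by
    rw [hS, mem_setOf_eq, zero_smul, add_zero]
    exact hx₀
  have hcases : ¬BddAbove S ∨ ¬BddBelow S := by
    by_contra h
    push_neg at h
    obtain ⟨⟨u, hu⟩, ⟨l, hl⟩⟩ := h
    apply hub
    have hsub : E ⊆ Metric.closedBall x₀ ((|l| + |u|) * ‖J w‖) := by
      intro x hx
      obtain ⟨t, rfl⟩ := hline x hx
      have htS : t ∈ S := hx
      have hlt : l ≤ t := hl htS
      have htu : t ≤ u := hu htS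
      rw [Metric.mem_closedBall, dist_eq_norm]
      have h3 : x₀ + t • J w - x₀ = t • J w := by abel
      rw [h3, norm_smul, Real.norm_eq_abs]
      have : |t| ≤ |l| + |u| := by
        rw [abs_le]
        constructor
        · have := neg_abs_le l; linarith [abs_nonneg u]
        · have := le_abs_self u; linarith [abs_nonneg l]
      exact mul_le_mul_of_nonneg_right this (norm_nonneg _)
    exact Metric.isBounded_closedBall.subset hsub
  have hOC := hconv.ordConnected
  rcases hcases with h | h
  · refine ⟨x₀, J w, hJw, fun t ht => ?_⟩
    obtain ⟨b, hbS, hbt⟩ := not_bddAbove_iff.mp h t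
    exact hOC.out h0S hbS ⟨ht, hbt.le⟩
  · refine ⟨x₀, -(J w), neg_ne_zero.mpr hJw, fun t ht => ?_⟩
    obtain ⟨b, hbS, hbt⟩ := not_bddBelow_iff.mp h (-t)
    have hmem : -t ∈ S := hOC.out hbS h0S ⟨hbt.le, neg_nonpos.mpr ht⟩
    have : x₀ + t • -(J w) = x₀ + (-t) • J w := by
      rw [smul_neg, neg_smul]
    rw [this]
    exact hmem

set_option maxHeartbeats 1000000 in
lemma neighbors_ray (P : Set Plane) (hP : P.Finite) (hcol : ¬ Collinear ℝ P)
    {p p' : Plane} (hp : p ∈ P) (hp' : p' ∈ P) (hne : p ≠ p')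
    (hN : Neighbors P p p') :
    ∃ (x₀ d : Plane) (T : ℝ), d ≠ 0 ∧
      ∀ t : ℝ, T ≤ t → x₀ + t • d ∈ cell P p ∩ cell P p' := by
  classical
  obtain ⟨-, -, -, hseg, hnoq⟩ := hN
  set K := convexHull ℝ P with hK
  have hKconv : Convex ℝ K := convex_convexHull ℝ P
  have hKint : (interior K).Nonempty := by
    have htop : affineSpan ℝ P = ⊤ := by
      by_contra h
      apply hcol
      have hne0 : P.Nonempty := ⟨p, hp⟩
      rw [AffineSubspace.affineSpan_eq_top_iff_vectorSpan_eq_top_of_nonempty ℝ Plane Plane hne0] at h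
      have hlt : vectorSpan ℝ P < ⊤ := lt_top_iff_ne_top.mpr h
      have hfr := Submodule.finrank_lt (K := ℝ) (V := Plane) hlt.ne
      rw [finrank_euclideanSpace_fin] at hfr
      exact (collinear_iff_finrank_le_one (k := ℝ) (s := P)).mpr (by omega)
    rw [hKconv.interior_nonempty_iff_affineSpan_eq_top, hK, affineSpan_convexHull]
    exact htop
  set m := midpoint ℝ p p' with hm
  have hmseg : m ∈ segment ℝ p p' := midpoint_mem_segment p p'
  have hmfr : m ∈ frontier K := hseg hmseg
  have hmint : m ∉ interior K := fun h => hmfr.2 h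
  obtain ⟨f, hf⟩ := geometric_hahn_banach_open_point hKconv.interior isOpen_interior hmint
  have hfK : ∀ a ∈ K, f a ≤ f m := by
    intro a ha
    obtain ⟨y, hy⟩ := hKint
    have key : ∀ ε : ℝ, 0 < ε → ε ≤ 1 → (1 - ε) * f a + ε * f y < f m := by
      intro ε h1 h2
      have hmem := hKconv.combo_self_interior_mem_interior ha hy
        (a := 1 - ε) (b := ε) (by linarith) h1 (by ring)
      have h9 := hf _ hmem
      rw [map_add, map_smul, map_smul, smul_eq_mul, smul_eq_mul] at h9
      exact h9
    by_contra hcon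
    push_neg at hcon
    have hY : f y < f m := by
      have := key 1 one_pos le_rfl
      simpa using this
    set ε := (f a - f m) / (2 * (f a - f y)) with hε
    have hAY : 0 < f a - f y := by linarith
    have hε1 : 0 < ε := by
      apply div_pos (by linarith) (by linarith)
    have hε2 : ε ≤ 1 := by
      rw [hε, div_le_one (by linarith)]
      linarith
    have h5 := key ε hε1 hε2
    have hεAY : ε * (f a - f y) = (f a - f m) / 2 := by
      rw [hε]; field_simp
    nlinarith
  have hpH : p ∈ K := subset_convexHull ℝ P hp
  have hp'H : p' ∈ K := subset_convexHull ℝ P hp'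
  have hfp : f p ≤ f m := hfK p hpH
  have hfp' : f p' ≤ f m := hfK p' hp'H
  have hm2 : m = (2:ℝ)⁻¹ • (p + p') := by
    rw [hm, midpoint_eq_smul_add]
    norm_num
  have hfm2 : f m = (2:ℝ)⁻¹ * (f p + f p') := by
    rw [hm2, map_smul, map_add, smul_eq_mul]
  have hfpm : f p = f m := by linarith
  have hfp'm : f p' = f m := by linarith
  -- Riesz representation
  set n := (InnerProductSpace.toDual ℝ Plane).symm f with hn'
  have hn : ∀ y : Plane, ⟪n, y⟫ = f y := fun y => InnerProductSpace.toDual_symm_apply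
  have hn0 : n ≠ 0 := by
    obtain ⟨y, hy⟩ := hKint
    intro h
    have h1 := hn y
    have h2 := hn m
    rw [h, inner_zero_left] at h1 h2
    have := hf y hy
    rw [← h1, ← h2] at this
    exact lt_irrefl _ this
  set w := p' - p with hw'
  have hw : w ≠ 0 := sub_ne_zero.mpr (Ne.symm hne)
  have hww : ⟪n, w⟫ = 0 := by
    rw [hn, hw', map_sub, hfpm, hfp'm, sub_self]
  have hmp : m - p = (2:ℝ)⁻¹ • w := by
    rw [hm2, hw']
    rw [smul_sub]
    rw [smul_add]
    module
  have hmp' : m - p' = -((2:ℝ)⁻¹ • w) := by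
    rw [hm2, hw', smul_sub, smul_add]
    module
  have hnormmp : ‖m - p‖ = ‖m - p'‖ := by rw [hmp, hmp', norm_neg]
  -- A and B
  set A : Plane → ℝ := fun q => ‖m - q‖^2 - ‖m - p‖^2 with hA
  set B : Plane → ℝ := fun q => 2 * (f m - f q) with hB
  have hBpos : ∀ q ∈ P, 0 ≤ B q := by
    intro q hq
    have := hfK q (subset_convexHull ℝ P hq)
    simp only [hB]
    linarith
  have keyA : ∀ q ∈ P, B q = 0 → 0 ≤ A q := by
    intro q hq hB0
    have hfq : f q = f m := by
      simp only [hB] at hB0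
      linarith
    by_cases hqp : q = p
    · subst hqp; simp [hA]
    by_cases hqp' : q = p'
    · subst hqp'; simp [hA, hnormmp]
    -- q is on the line through p and p', outside the segment
    have hq0 : ⟪n, q - p⟫ = 0 := by
      rw [hn, map_sub, hfq, hfpm, sub_self]
    obtain ⟨t₁, hw1⟩ := perp_span hn0 hww
    obtain ⟨t₂, hw2⟩ := perp_span hn0 hq0
    have ht₁ : t₁ ≠ 0 := by
      rintro rfl
      rw [zero_smul] at hw1
      exact hw hw1
    have hqline : q - p = (t₂ / t₁) • w := by
      rw [hw1, smul_smul, div_mul_cancel₀ _ ht₁, ← hw2]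
    set σ := t₂ / t₁ with hσ'
    have hσ : σ < 0 ∨ 1 < σ := by
      by_contra hcon
      push_neg at hcon
      refine hnoq q ⟨hq, by simp [hqp, hqp']⟩ ?_
      rw [segment_eq_image']
      refine ⟨σ, ⟨hcon.1, hcon.2⟩, ?_⟩
      show p + σ • (p' - p) = q
      rw [← hw', ← hqline]
      abel
    have hmq : m - q = ((2:ℝ)⁻¹ - σ) • w := by
      have : m - q = (m - p) - (q - p) := by abel
      rw [this, hmp, hqline, ← sub_smul]
    have hwpos : 0 < ‖w‖ := norm_pos_iff.mpr hw
    simp only [hA]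
    rw [hmq, hmp, norm_smul, norm_smul, Real.norm_eq_abs, Real.norm_eq_abs]
    rw [mul_pow, mul_pow, sq_abs, sq_abs]
    have hσσ : 0 ≤ σ * (σ - 1) := by
      rcases hσ with h | h
      · nlinarith
      · nlinarith
    nlinarith [mul_nonneg hσσ (sq_nonneg ‖w‖)]
  -- thresholds
  set τ : Plane → ℝ := fun q => if B q = 0 then 0 else max 0 (-(A q) / B q) with hτ'
  have hτ0 : ∀ q, 0 ≤ τ q := by
    intro q
    simp only [hτ']
    split
    · exact le_rfl
    · exact le_max_left _ _
  set T := ∑ q ∈ hP.toFinset, τ q with hT'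
  have hT : ∀ q ∈ P, τ q ≤ T := by
    intro q hq
    exact Finset.single_le_sum (fun i _ => hτ0 i) (hP.mem_toFinset.mpr hq)
  refine ⟨m, n, T, hn0, fun t ht => ?_⟩
  have hT0 : 0 ≤ T := Finset.sum_nonneg (fun i _ => hτ0 i)
  have ht0 : 0 ≤ t := le_trans hT0 ht
  have hAB : ∀ q ∈ P, 0 ≤ A q + t * B q := by
    intro q hq
    by_cases hB0 : B q = 0
    · rw [hB0, mul_zero, add_zero]
      exact keyA q hq hB0
    · have hBpos' : 0 < B q := lt_of_le_of_ne (hBpos q hq) (Ne.symm hB0)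
      have hτq : -(A q) / B q ≤ τ q := by
        simp only [hτ']
        rw [if_neg hB0]
        exact le_max_right _ _
      have h1 : -(A q) / B q ≤ t := le_trans hτq (le_trans (hT q hq) ht)
      have h2 : -(A q) ≤ t * B q := by
        rw [div_le_iff₀ hBpos'] at h1
        linarith
      linarith
  -- distance computation
  have hdist : ∀ q : Plane, dist (m + t • n) q ^ 2
      = ‖m - q‖^2 + 2*t*⟪m - q, n⟫ + t^2 * ‖n‖^2 := by
    intro q
    rw [dist_eq_norm]
    have h1 : m + t • n - q = (m - q) + t • n := by abel
    rw [h1, norm_add_sq_real, real_inner_smul_right, norm_smul, Real.norm_eq_abs,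
      mul_pow, sq_abs]
    ring
  have hcell : ∀ r : Plane, ‖m - r‖ = ‖m - p‖ → f r = f m →
      ∀ q ∈ P, dist (m + t • n) r ≤ dist (m + t • n) q := by
    intro r hr1 hr2 q hq
    have h1 := hdist q
    have h2 := hdist r
    have hin : ⟪m - q, n⟫ - ⟪m - r, n⟫ = f r - f q := by
      rw [← inner_sub_left]
      have h3 : m - q - (m - r) = r - q := by abel
      rw [h3, real_inner_comm, hn, map_sub]
    have hdiff : dist (m + t • n) q ^ 2 - dist (m + t • n) r ^ 2 = A q + t * B q := by
      rw [h1, h2, hr1]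
      simp only [hA, hB]
      have h4 : ⟪m - q, n⟫ = ⟪m - r, n⟫ + (f r - f q) := by linarith
      rw [h4, hr2]
      ring
    have h5 := hAB q hq
    have h6 : dist (m + t • n) r ^ 2 ≤ dist (m + t • n) q ^ 2 := by linarith
    by_contra hcon
    push_neg at hcon
    nlinarith [dist_nonneg (x := m + t • n) (y := q), dist_nonneg (x := m + t • n) (y := r)]
  exact ⟨hcell p rfl hfpm, hcell p' hnormmp.symm hfp'm⟩

end VoronoiAux

theorem edge_unbounded_iff_neighbors (P : Set Plane) (hP : P.Finite)
    (hcol : ¬ Collinear ℝ P) (p p' : Plane) (hp : p ∈ P) (hp' : p' ∈ P) (hne : p ≠ p')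
    (hedge : (cell P p ∩ cell P p').Nontrivial) :
    (¬ Bornology.IsBounded (cell P p ∩ cell P p') ↔ Neighbors P p p') ∧
    (Bornology.IsBounded (cell P p ∩ cell P p') ↔ ¬ Neighbors P p p') := by
  have h1 : ¬ Bornology.IsBounded (cell P p ∩ cell P p') ↔ Neighbors P p p' := by
    constructor
    · intro hub
      obtain ⟨x₀, d, hd, hray⟩ := unbounded_ray hp hp' hne hub
      exact ray_neighbors P hP hp hp' hne x₀ d hd hray
    · intro hN
      obtain ⟨x₀, d, T, hd, hray⟩ := neighbors_ray P hP hcol hp hp' hne hN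
      exact ray_unbounded x₀ d T hd hray
  refine ⟨h1, ?_⟩
  constructor
  · intro hB hN
    exact (h1.mpr hN) hB
  · intro hN
    by_contra hnb
    exact hN (h1.mp hnb)
end

section
/- Let P be a finite subset of the Euclidean plane ℝ² with P.ncard = 5. Then either there exists n ≥ 1 with 𝒱^[n](P) = ∅, or (𝒱^[n](P)).ncard = 5 for every n ≥ 0. -/
open Set

lemma dist_sq (x y : Plane) : dist x y ^ 2 = (x 0 - y 0)^2 + (x 1 - y 1)^2 := by
  rw [EuclideanSpace.dist_eq, Real.sq_sqrt (by positivity)]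
  simp [Fin.sum_univ_two, Real.dist_eq, sq_abs]

lemma plane_ext {x y : Plane} (h0 : x 0 = y 0) (h1 : x 1 = y 1) : x = y := by
  ext i; fin_cases i <;> assumption

lemma dist_eq_of_sq {x a b : Plane} (h : dist x a = dist x b) :
    (x 0 - a 0)^2 + (x 1 - a 1)^2 = (x 0 - b 0)^2 + (x 1 - b 1)^2 := by
  rw [← dist_sq, ← dist_sq, h]

lemma dist_lt_of_sq {x a b : Plane} (h : dist x a < dist x b) :
    (x 0 - a 0)^2 + (x 1 - a 1)^2 < (x 0 - b 0)^2 + (x 1 - b 1)^2 := by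
  rw [← dist_sq, ← dist_sq]
  nlinarith [dist_nonneg (x := x) (y := a), dist_nonneg (x := x) (y := b)]

lemma ne_coords {x y : Plane} (h : x ≠ y) : ¬(x 0 - y 0 = 0 ∧ x 1 - y 1 = 0) := by
  rintro ⟨h0, h1⟩; exact h (plane_ext (by linarith) (by linarith))

/-- two vectors orthogonal to the same nonzero vector are parallel (cross = 0) -/
lemma cross_zero {n0 n1 v0 v1 w0 w1 : ℝ} (hn : ¬(n0 = 0 ∧ n1 = 0))
    (hv : v0*n0 + v1*n1 = 0) (hw : w0*n0 + w1*n1 = 0) : v0*w1 - v1*w0 = 0 := by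
  by_cases h0 : n0 = 0
  · have h1 : n1 ≠ 0 := fun h1 => hn ⟨h0, h1⟩
    have hv1 : v1 = 0 := by
      rcases mul_eq_zero.mp (by rw [h0] at hv; linarith : v1 * n1 = 0) with h | h
      · exact h
      · exact absurd h h1
    have hw1 : w1 = 0 := by
      rcases mul_eq_zero.mp (by rw [h0] at hw; linarith : w1 * n1 = 0) with h | h
      · exact h
      · exact absurd h h1
    rw [hv1, hw1]; ring
  · have e1 : (v0*w1 - v1*w0) * n0 = w1 * (v0*n0 + v1*n1) - v1 * (w0*n0 + w1*n1) := by ring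
    rw [hv, hw] at e1
    have : (v0*w1 - v1*w0) * n0 = 0 := by linarith
    exact (mul_eq_zero.mp this).resolve_right h0

lemma para {v0 v1 w0 w1 : ℝ} (h : v0*w1 - v1*w0 = 0) (hv : ¬(v0 = 0 ∧ v1 = 0)) :
    ∃ t : ℝ, w0 = t*v0 ∧ w1 = t*v1 := by
  by_cases h0 : v0 = 0
  · have h1 : v1 ≠ 0 := fun h1 => hv ⟨h0, h1⟩
    refine ⟨w1 / v1, ?_, by field_simp⟩
    rw [h0] at h ⊢
    rcases mul_eq_zero.mp (by linarith : v1 * w0 = 0) with h | h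
    · exact absurd h h1
    · rw [h]; ring
  · refine ⟨w0 / v0, by field_simp, ?_⟩
    field_simp
    nlinarith [h]

/-- Two distinct circles can't share three distinct points. -/
lemma centers_eq {x y a b c : Plane} (hab : a ≠ b) (hac : a ≠ c) (hbc : b ≠ c)
    (hxab : dist x a = dist x b) (hxac : dist x a = dist x c)
    (hyab : dist y a = dist y b) (hyac : dist y a = dist y c) : x = y := by
  by_contra hxy
  obtain ⟨x0, x1, hx0, hx1⟩ : ∃ u v, x 0 = u ∧ x 1 = v := ⟨_, _, rfl, rfl⟩
  obtain ⟨y0, y1, hy0, hy1⟩ : ∃ u v, y 0 = u ∧ y 1 = v := ⟨_, _, rfl, rfl⟩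
  obtain ⟨a0, a1, ha0, ha1⟩ : ∃ u v, a 0 = u ∧ a 1 = v := ⟨_, _, rfl, rfl⟩
  obtain ⟨b0, b1, hb0, hb1⟩ : ∃ u v, b 0 = u ∧ b 1 = v := ⟨_, _, rfl, rfl⟩
  obtain ⟨c0, c1, hc0, hc1⟩ : ∃ u v, c 0 = u ∧ c 1 = v := ⟨_, _, rfl, rfl⟩
  have exab := dist_eq_of_sq hxab
  have exac := dist_eq_of_sq hxac
  have eyab := dist_eq_of_sq hyab
  have eyac := dist_eq_of_sq hyac
  rw [hx0, hx1, ha0, ha1, hb0, hb1] at exab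
  rw [hx0, hx1, ha0, ha1, hc0, hc1] at exac
  rw [hy0, hy1, ha0, ha1, hb0, hb1] at eyab
  rw [hy0, hy1, ha0, ha1, hc0, hc1] at eyac
  have hxyc : ¬(x0 - y0 = 0 ∧ x1 - y1 = 0) := by
    rw [← hx0, ← hx1, ← hy0, ← hy1]; exact ne_coords hxy
  have habc : ¬(b0 - a0 = 0 ∧ b1 - a1 = 0) := by
    rw [← hb0, ← hb1, ← ha0, ← ha1]; exact ne_coords (Ne.symm hab)
  have hperp1 : (b0 - a0)*(x0 - y0) + (b1 - a1)*(x1 - y1) = 0 := by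
    linear_combination (exab - eyab) / 2
  have hperp2 : (c0 - a0)*(x0 - y0) + (c1 - a1)*(x1 - y1) = 0 := by
    linear_combination (exac - eyac) / 2
  have hcr : (b0 - a0)*(c1 - a1) - (b1 - a1)*(c0 - a0) = 0 :=
    cross_zero hxyc hperp1 hperp2
  obtain ⟨t, ht0, ht1⟩ := para hcr habc
  rw [show c0 = a0 + t*(b0-a0) from by linarith] at exac
  rw [show c1 = a1 + t*(b1-a1) from by linarith] at exac
  have hq : t * (t - 1) * ((b0 - a0)^2 + (b1 - a1)^2) = 0 := by linear_combination t * exab - exac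
  have hpos : (b0 - a0)^2 + (b1 - a1)^2 > 0 := by
    rcases not_and_or.mp habc with h | h
    · positivity
    · positivity
  rcases mul_eq_zero.mp hq with h | h
  · rcases mul_eq_zero.mp h with h | h
    · rw [h] at ht0 ht1
      exact hac (plane_ext (by rw [hc0, ha0]; linarith) (by rw [hc1, ha1]; linarith))
    · have ht : t = 1 := by linarith
      rw [ht] at ht0 ht1
      exact hbc (plane_ext (by rw [hc0, hb0]; linarith) (by rw [hc1, hb1]; linarith))
  · linarith

lemma nearest_subset {P : Set Plane} {x : Plane} : nearest P x ⊆ P := fun p hp => hp.1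

lemma nearest_dist_eq {P : Set Plane} {x p q : Plane}
    (hp : p ∈ nearest P x) (hq : q ∈ nearest P x) : dist x p = dist x q :=
  le_antisymm (hp.2 q hq.1) (hq.2 p hp.1)

lemma mem_nearest_of_dist_eq {P : Set Plane} {x p q : Plane}
    (hq : q ∈ P) (hp : p ∈ nearest P x) (h : dist x q = dist x p) : q ∈ nearest P x :=
  ⟨hq, fun r hr => h ▸ hp.2 r hr⟩

lemma exists_third {s : Set Plane} (h3 : 3 ≤ s.encard) (a b : Plane) :
    ∃ c ∈ s, c ≠ a ∧ c ≠ b := by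
  by_contra hc
  push_neg at hc
  have hsub : s ⊆ {a, b} := by
    intro c hcs
    rcases Classical.em (c = a) with h | h
    · exact Or.inl h
    · exact Or.inr (hc c hcs h)
  have : s.encard ≤ 2 := by
    refine le_trans (Set.encard_mono hsub) ?_
    refine le_trans (Set.encard_insert_le _ _) ?_
    rw [Set.encard_singleton]
    decide
  exact absurd (le_trans h3 this) (by norm_num)

/-- If two points share three distinct nearest generators, they are equal. -/
lemma common3 {P : Set Plane} {x y a b c : Plane}
    (hab : a ≠ b) (hac : a ≠ c) (hbc : b ≠ c)
    (hax : a ∈ nearest P x) (hbx : b ∈ nearest P x) (hcx : c ∈ nearest P x)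
    (hay : a ∈ nearest P y) (hby : b ∈ nearest P y) (hcy : c ∈ nearest P y) : x = y :=
  centers_eq hab hac hbc (nearest_dist_eq hax hbx) (nearest_dist_eq hax hcx)
    (nearest_dist_eq hay hby) (nearest_dist_eq hay hcy)

/-- strictness: if `c ∈ P` is not nearest to `p` then it is strictly farther. -/
lemma strict_far {P : Set Plane} {p a c : Plane} (hcP : c ∈ P)
    (hap : a ∈ nearest P p) (hcn : c ∉ nearest P p) : dist p a < dist p c :=
  lt_of_le_of_ne (hap.2 c hcP) (fun h => hcn (mem_nearest_of_dist_eq hcP hap h.symm))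

/-- A point between two others cannot be on the `a`-`c` bisector while the outer two
are strictly closer to `a` than to `c`. -/
lemma mid_lemma {m p q a c : Plane} {s : ℝ} (hs0 : 0 ≤ s) (hs1 : s ≤ 1)
    (hm0 : m 0 = (1-s) * p 0 + s * q 0) (hm1 : m 1 = (1-s) * p 1 + s * q 1)
    (hmeq : dist m c = dist m a) (hpa : dist p a < dist p c) (hqa : dist q a < dist q c) :
    False := by
  have em := dist_eq_of_sq hmeq
  have ep := dist_lt_of_sq hpa
  have eq' := dist_lt_of_sq hqa
  obtain ⟨m0, m1, hM0, hM1⟩ : ∃ u v, m 0 = u ∧ m 1 = v := ⟨_, _, rfl, rfl⟩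
  obtain ⟨p0, p1, hP0, hP1⟩ : ∃ u v, p 0 = u ∧ p 1 = v := ⟨_, _, rfl, rfl⟩
  obtain ⟨q0, q1, hQ0, hQ1⟩ : ∃ u v, q 0 = u ∧ q 1 = v := ⟨_, _, rfl, rfl⟩
  obtain ⟨a0, a1, hA0, hA1⟩ : ∃ u v, a 0 = u ∧ a 1 = v := ⟨_, _, rfl, rfl⟩
  obtain ⟨c0, c1, hC0, hC1⟩ : ∃ u v, c 0 = u ∧ c 1 = v := ⟨_, _, rfl, rfl⟩
  rw [hM0, hM1, hC0, hC1, hA0, hA1] at em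
  rw [hP0, hP1, hC0, hC1, hA0, hA1] at ep
  rw [hQ0, hQ1, hC0, hC1, hA0, hA1] at eq'
  rw [hM0, hP0, hQ0] at hm0
  rw [hM1, hP1, hQ1] at hm1
  have em' : (m0-c0)^2+(m1-c1)^2 - ((m0-a0)^2+(m1-a1)^2) = 0 := by linarith
  have hA : 0 < (p0-c0)^2+(p1-c1)^2 - ((p0-a0)^2+(p1-a1)^2) := by linarith
  have hB : 0 < (q0-c0)^2+(q1-c1)^2 - ((q0-a0)^2+(q1-a1)^2) := by linarith
  set A := (p0-c0)^2+(p1-c1)^2 - ((p0-a0)^2+(p1-a1)^2) with hAdef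
  set B := (q0-c0)^2+(q1-c1)^2 - ((q0-a0)^2+(q1-a1)^2) with hBdef
  have key : (m0-c0)^2+(m1-c1)^2 - ((m0-a0)^2+(m1-a1)^2) = (1-s) * A + s * B := by
    rw [hAdef, hBdef, hm0, hm1]; ring
  rcases lt_or_eq_of_le hs1 with h | h
  · have h1 : 0 < (1-s) * A := mul_pos (by linarith) hA
    have h2 : 0 ≤ s * B := mul_nonneg hs0 (le_of_lt hB)
    linarith
  · subst h
    linarith

lemma perp_of_bisector {x y a b : Plane} (hx : dist x a = dist x b) (hy : dist y a = dist y b) :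
    (x 0 - y 0)*(b 0 - a 0) + (x 1 - y 1)*(b 1 - a 1) = 0 := by
  have ex := dist_eq_of_sq hx
  have ey := dist_eq_of_sq hy
  linear_combination (ex - ey) / 2

lemma pair_two_aux {P : Set Plane} {m p q a b : Plane} {s : ℝ} (hs0 : 0 ≤ s) (hs1 : s ≤ 1)
    (hm0 : m 0 = (1-s) * p 0 + s * q 0) (hm1 : m 1 = (1-s) * p 1 + s * q 1)
    (hmp : m ≠ p) (hmq : m ≠ q) (hab : a ≠ b)
    (hm : m ∈ vtx P) (ham : a ∈ nearest P m) (hbm : b ∈ nearest P m)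
    (hap : a ∈ nearest P p) (hbp : b ∈ nearest P p)
    (haq : a ∈ nearest P q) (hbq : b ∈ nearest P q) : False := by
  obtain ⟨c, hcm, hca, hcb⟩ := exists_third hm a b
  have hcP : c ∈ P := nearest_subset hcm
  have hcp : c ∉ nearest P p := fun hc =>
    hmp (common3 hab hca.symm hcb.symm ham hbm hcm hap hbp hc)
  have hcq : c ∉ nearest P q := fun hc =>
    hmq (common3 hab hca.symm hcb.symm ham hbm hcm haq hbq hc)
  exact mid_lemma hs0 hs1 hm0 hm1 (nearest_dist_eq hcm ham)
    (strict_far hcP hap hcp) (strict_far hcP haq hcq)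

/-- A pair {a, b} cannot be contained in the nearest sets of three distinct Voronoi vertices. -/
lemma pair_le_two {P : Set Plane} {x y z a b : Plane}
    (hxy : x ≠ y) (hxz : x ≠ z) (hyz : y ≠ z) (hab : a ≠ b)
    (hx : x ∈ vtx P) (hy : y ∈ vtx P) (hz : z ∈ vtx P)
    (hax : a ∈ nearest P x) (hbx : b ∈ nearest P x)
    (hay : a ∈ nearest P y) (hby : b ∈ nearest P y)
    (haz : a ∈ nearest P z) (hbz : b ∈ nearest P z) : False := by
  have p1 : (x 0 - y 0)*(b 0 - a 0) + (x 1 - y 1)*(b 1 - a 1) = 0 :=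
    perp_of_bisector (nearest_dist_eq hax hbx) (nearest_dist_eq hay hby)
  have p2 : (x 0 - z 0)*(b 0 - a 0) + (x 1 - z 1)*(b 1 - a 1) = 0 :=
    perp_of_bisector (nearest_dist_eq hax hbx) (nearest_dist_eq haz hbz)
  have hcr : (x 0 - y 0)*(x 1 - z 1) - (x 1 - y 1)*(x 0 - z 0) = 0 :=
    cross_zero (ne_coords (Ne.symm hab)) p1 p2
  obtain ⟨t, ht0, ht1⟩ := para hcr (ne_coords hxy)
  rcases le_or_gt t 0 with h | h
  · -- x is in the middle : x = (1-s) z + s y with s = -t/(1-t)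
    have h1t : (0:ℝ) < 1 - t := by linarith
    have h1t' : (1:ℝ) - t ≠ 0 := ne_of_gt h1t
    refine pair_two_aux (P := P) (m := x) (p := z) (q := y) (s := -t/(1-t))
      (div_nonneg (by linarith) (by linarith)) ?_ ?_ ?_ hxz hxy hab hx hax hbx haz hbz hay hby
    · rw [div_le_one h1t]; linarith
    · field_simp; linarith [ht0]
    · field_simp; linarith [ht1]
  · rcases le_or_gt t 1 with h' | h'
    · -- z is in the middle : z = (1-t) x + t y
      refine pair_two_aux (P := P) (m := z) (p := x) (q := y) (s := t)
        (le_of_lt h) h' ?_ ?_ (Ne.symm hxz) (Ne.symm hyz) hab hz haz hbz hax hbx hay hby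
      · linarith [ht0]
      · linarith [ht1]
    · -- y is in the middle : y = (1-s) x + s z with s = 1/t
      have ht' : (0:ℝ) < t := by linarith
      refine pair_two_aux (P := P) (m := y) (p := x) (q := z) (s := 1/t)
        (div_nonneg (by linarith) (by linarith)) ?_ ?_ ?_ (Ne.symm hxy) hyz hab hy hay hby hax hbx haz hbz
      · rw [div_le_one ht']; linarith
      · field_simp; linarith [ht0]
      · field_simp; linarith [ht1]

/-- The pair (a,b) spans a supporting line of Q : all of Q is on one side. -/
def OneSided (Q : Set Plane) (a b : Plane) : Prop :=
  ∃ w0 w1 : ℝ, ¬(w0 = 0 ∧ w1 = 0) ∧ w0*(b 0 - a 0) + w1*(b 1 - a 1) = 0 ∧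
    ∀ q ∈ Q, w0*(q 0 - a 0) + w1*(q 1 - a 1) ≤ 0

/-- A one-sided pair is in the nearest set of at most one Voronoi vertex. -/
lemma onesided_le_one {P : Set Plane} {x y a b : Plane}
    (hxy : x ≠ y) (hab : a ≠ b) (hx : x ∈ vtx P) (hy : y ∈ vtx P)
    (hax : a ∈ nearest P x) (hbx : b ∈ nearest P x)
    (hay : a ∈ nearest P y) (hby : b ∈ nearest P y)
    (hos : OneSided P a b) : False := by
  obtain ⟨w0, w1, hw, hwperp, hwside⟩ := hos
  obtain ⟨c, hcx, hca, hcb⟩ := exists_third hx a b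
  obtain ⟨d, hdy, hda, hdb⟩ := exists_third hy a b
  have hcP : c ∈ P := nearest_subset hcx
  have hdP : d ∈ P := nearest_subset hdy
  have hcy : c ∉ nearest P y := fun hc =>
    hxy (common3 hab hca.symm hcb.symm hax hbx hcx hay hby hc)
  have hdx : d ∉ nearest P x := fun hd =>
    (Ne.symm hxy) (common3 hab hda.symm hdb.symm hay hby hdy hax hbx hd)
  -- u = y - x is perpendicular to b - a
  have p1 : (y 0 - x 0)*(b 0 - a 0) + (y 1 - x 1)*(b 1 - a 1) = 0 :=
    perp_of_bisector (nearest_dist_eq hay hby) (nearest_dist_eq hax hbx)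
  -- sign of ⟨u, c - a⟩ : negative
  have hsc : (y 0 - x 0)*(c 0 - a 0) + (y 1 - x 1)*(c 1 - a 1) < 0 := by
    have e1 := dist_eq_of_sq (nearest_dist_eq hcx hax)   -- dist x c = dist x a
    have e2 := dist_lt_of_sq (strict_far hcP hay hcy)     -- dist y a < dist y c
    nlinarith [e1, e2]
  have hsd : (y 0 - x 0)*(d 0 - a 0) + (y 1 - x 1)*(d 1 - a 1) > 0 := by
    have e1 := dist_eq_of_sq (nearest_dist_eq hdy hay)   -- dist y d = dist y a
    have e2 := dist_lt_of_sq (strict_far hdP hax hdx)     -- dist x a < dist x d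
    nlinarith [e1, e2]
  -- w is parallel to u
  have hcr : (y 0 - x 0)*w1 - (y 1 - x 1)*w0 = 0 :=
    cross_zero (ne_coords (Ne.symm hab)) p1 hwperp
  obtain ⟨t, htw0, htw1⟩ := para (by linarith [hcr] :
      (y 0 - x 0)*w1 - (y 1 - x 1)*w0 = 0) (ne_coords (Ne.symm hxy))
  -- htw0 : w0 = t * (y 0 - x 0), htw1 : w1 = t * (y 1 - x 1)
  have hc' := hwside c hcP
  have hd' := hwside d hdP
  rw [htw0, htw1] at hc' hd'
  have ht0 : t ≠ 0 := by
    rintro rfl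
    simp at htw0 htw1
    exact hw ⟨htw0, htw1⟩
  rcases lt_or_gt_of_ne ht0 with ht | ht
  · nlinarith [hc']
  · nlinarith [hd']

/-- Core algebraic inequality for the angular-extremal argument. -/
lemma core_ineq {u0 u1 v0 v1 nu nv : ℝ} (hnu : 0 < nu) (hnv : 0 < nv)
    (hu : nu^2 = u0^2 + u1^2) (hv : nv^2 = v0^2 + v1^2)
    (hu0 : 0 ≤ u0) (hv0 : 0 ≤ v0) (h : v1 * nu ≤ u1 * nv) :
    u0 * v1 - u1 * v0 ≤ 0 := by
  rcases le_or_gt v1 0 with hv1 | hv1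
  · rcases le_or_gt 0 u1 with hu1 | hu1
    · nlinarith
    · -- u1 < 0, v1 ≤ 0
      have hb : u1 * nv < 0 := mul_neg_of_neg_of_pos hu1 hnv
      have ha : v1 * nu ≤ 0 := mul_nonpos_of_nonpos_of_nonneg hv1 (le_of_lt hnu)
      have key : (u1*nv - v1*nu) * (-(v1*nu) - u1*nv) ≥ 0 :=
        mul_nonneg (by linarith) (by linarith)
      have hsq : v1^2 * nu^2 ≥ u1^2 * nv^2 := by nlinarith [key]
      have e1 : v1^2 * nu^2 = v1^2*u0^2 + v1^2*u1^2 := by rw [hu]; ring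
      have e2 : u1^2 * nv^2 = u1^2*v0^2 + u1^2*v1^2 := by rw [hv]; ring
      have h2 : v1^2 * u0^2 ≥ u1^2 * v0^2 := by nlinarith [hsq, e1, e2]
      -- A := -(u0*v1) ≥ 0, B := -(u1*v0) ≥ 0, A^2 ≥ B^2 → A ≥ B
      have hA : 0 ≤ -(u0*v1) := by nlinarith
      have hB : 0 ≤ -(u1*v0) := by nlinarith
      by_contra hg
      push_neg at hg
      have hgt : -(u1*v0) - -(u0*v1) > 0 := by nlinarith
      have hB0 : 0 < -(u1*v0) := by nlinarith
      have k1 := mul_pos hgt hB0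
      have k2 := mul_nonneg (le_of_lt hgt) hA
      linarith only [k1, k2, h2]
  · -- v1 > 0, hence u1 > 0
    have hu1 : 0 < u1 := by nlinarith [mul_pos hv1 hnu]
    have hsq : v1^2 * nu^2 ≤ u1^2 * nv^2 := by
      nlinarith [mul_self_le_mul_self (le_of_lt (mul_pos hv1 hnu)) h]
    have e1 : v1^2 * nu^2 = v1^2*u0^2 + v1^2*u1^2 := by rw [hu]; ring
    have e2 : u1^2 * nv^2 = u1^2*v0^2 + u1^2*v1^2 := by rw [hv]; ring
    have h2 : v1^2 * u0^2 ≤ u1^2 * v0^2 := by nlinarith [hsq, e1, e2]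
    have hA : 0 ≤ u0*v1 := mul_nonneg hu0 (le_of_lt hv1)
    have hB : 0 ≤ u1*v0 := mul_nonneg (le_of_lt hu1) hv0
    by_contra hg
    push_neg at hg
    have hgt : u0*v1 - u1*v0 > 0 := by nlinarith
    have hA0 : 0 < u0*v1 := by nlinarith
    have k1 := mul_pos hgt hA0
    have k2 := mul_nonneg (le_of_lt hgt) hB
    linarith only [k1, k2, h2]

attribute [local instance] Classical.decEq Classical.propDecidable

lemma half_sides {Q : Set Plane} (hQ : Q.Finite) (h3 : 3 ≤ Q.ncard) :
    ∃ a p q : Plane, a ∈ Q ∧ p ∈ Q ∧ q ∈ Q ∧ p ≠ q ∧ p ≠ a ∧ q ≠ a ∧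
      OneSided Q a p ∧ OneSided Q a q ∧
      (∀ r ∈ Q, a 0 ≤ r 0 ∧ (r 0 = a 0 → a 1 ≤ r 1)) := by
  classical
  set Sf := hQ.toFinset with hSf
  have hcard : Sf.card = Q.ncard := (Set.ncard_eq_toFinset_card Q hQ).symm
  have hne : Sf.Nonempty := by
    rw [← Finset.card_pos, hcard]; omega
  obtain ⟨m, hmS, hmmin⟩ := Sf.exists_min_image (fun p => p 0) hne
  have hA0ne : (Sf.filter (fun p => p 0 = m 0)).Nonempty := ⟨m, Finset.mem_filter.mpr ⟨hmS, rfl⟩⟩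
  obtain ⟨a, haf, hamin⟩ := (Sf.filter (fun p => p 0 = m 0)).exists_min_image (fun p => p 1) hA0ne
  have haS : a ∈ Sf := (Finset.mem_filter.mp haf).1
  have ha0 : a 0 = m 0 := (Finset.mem_filter.mp haf).2
  have haQ : a ∈ Q := hQ.mem_toFinset.mp haS
  have hlex : ∀ r ∈ Q, a 0 ≤ r 0 ∧ (r 0 = a 0 → a 1 ≤ r 1) := by
    intro r hr
    have hrS : r ∈ Sf := hQ.mem_toFinset.mpr hr
    constructor
    · rw [ha0]; exact hmmin r hrS
    · intro h
      exact hamin r (Finset.mem_filter.mpr ⟨hrS, by rw [h, ha0]⟩)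
  set R := Sf.erase a with hR
  have hRne : 1 < R.card := by
    have := Finset.card_erase_of_mem haS
    rw [← hR] at this; omega
  have hRne' : R.Nonempty := Finset.card_pos.mp (by omega)
  obtain ⟨pmax, hpmaxR, hpmax⟩ := R.exists_max_image (fun q => (q 1 - a 1) / dist q a) hRne'
  obtain ⟨pmin, hpminR, hpmin⟩ := R.exists_min_image (fun q => (q 1 - a 1) / dist q a) hRne'
  have hpmaxQ : pmax ∈ Q := hQ.mem_toFinset.mp (Finset.mem_of_mem_erase hpmaxR)
  have hpminQ : pmin ∈ Q := hQ.mem_toFinset.mp (Finset.mem_of_mem_erase hpminR)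
  have hpmaxa : pmax ≠ a := Finset.ne_of_mem_erase hpmaxR
  have hpmina : pmin ≠ a := Finset.ne_of_mem_erase hpminR
  -- max claim
  have claimmax : ∀ r ∈ Q, (pmax 0 - a 0)*(r 1 - a 1) - (pmax 1 - a 1)*(r 0 - a 0) ≤ 0 := by
    intro r hr
    by_cases hra : r = a
    · subst hra; ring_nf; exact le_refl _
    · have hrR : r ∈ R := Finset.mem_erase.mpr ⟨hra, hQ.mem_toFinset.mpr hr⟩
      have hnu : 0 < dist pmax a := dist_pos.mpr hpmaxa
      have hnv : 0 < dist r a := dist_pos.mpr hra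
      refine core_ineq hnu hnv (dist_sq pmax a) (dist_sq r a)
        (by linarith [(hlex pmax hpmaxQ).1]) (by linarith [(hlex r hr).1]) ?_
      have := hpmax r hrR
      rw [div_le_div_iff₀ hnv hnu] at this
      linarith
  have claimmin : ∀ r ∈ Q, 0 ≤ (pmin 0 - a 0)*(r 1 - a 1) - (pmin 1 - a 1)*(r 0 - a 0) := by
    intro r hr
    by_cases hra : r = a
    · subst hra; ring_nf; exact le_refl _
    · have hrR : r ∈ R := Finset.mem_erase.mpr ⟨hra, hQ.mem_toFinset.mpr hr⟩
      have hnu : 0 < dist pmin a := dist_pos.mpr hpmina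
      have hnv : 0 < dist r a := dist_pos.mpr hra
      have hcore := core_ineq (u0 := pmin 0 - a 0) (u1 := -(pmin 1 - a 1))
        (v0 := r 0 - a 0) (v1 := -(r 1 - a 1)) hnu hnv
        (by rw [dist_sq pmin a]; ring) (by rw [dist_sq r a]; ring)
        (by linarith [(hlex pmin hpminQ).1]) (by linarith [(hlex r hr).1]) ?_
      · linarith [hcore]
      · have := hpmin r hrR
        rw [div_le_div_iff₀ hnu hnv] at this
        linarith
  by_cases hpp : pmax = pmin
  · -- degenerate : everything on the line through a and pmax
    have hzero : ∀ r ∈ Q, (pmax 0 - a 0)*(r 1 - a 1) - (pmax 1 - a 1)*(r 0 - a 0) = 0 := by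
      intro r hr
      have h1 := claimmax r hr
      have h2 := claimmin r hr
      rw [← hpp] at h2
      linarith
    obtain ⟨p, hpR, q, hqR, hpq⟩ := Finset.one_lt_card.mp hRne
    have hwne : ¬(-(pmax 1 - a 1) = 0 ∧ (pmax 0 - a 0) = 0) := by
      rintro ⟨h1, h2⟩
      exact ne_coords hpmaxa ⟨h2, by linarith⟩
    refine ⟨a, p, q, haQ, hQ.mem_toFinset.mp (Finset.mem_of_mem_erase hpR),
      hQ.mem_toFinset.mp (Finset.mem_of_mem_erase hqR), hpq,
      Finset.ne_of_mem_erase hpR, Finset.ne_of_mem_erase hqR, ?_, ?_, hlex⟩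
    · exact ⟨-(pmax 1 - a 1), pmax 0 - a 0, hwne,
        by linarith [hzero p (hQ.mem_toFinset.mp (Finset.mem_of_mem_erase hpR))],
        fun r hr => by linarith [hzero r hr]⟩
    · exact ⟨-(pmax 1 - a 1), pmax 0 - a 0, hwne,
        by linarith [hzero q (hQ.mem_toFinset.mp (Finset.mem_of_mem_erase hqR))],
        fun r hr => by linarith [hzero r hr]⟩
  · refine ⟨a, pmax, pmin, haQ, hpmaxQ, hpminQ, hpp, hpmaxa, hpmina, ?_, ?_, hlex⟩
    · refine ⟨-(pmax 1 - a 1), pmax 0 - a 0, ?_, by ring, fun r hr => by linarith [claimmax r hr]⟩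
      rintro ⟨h1, h2⟩
      exact ne_coords hpmaxa ⟨h2, by linarith⟩
    · refine ⟨pmin 1 - a 1, -(pmin 0 - a 0), ?_, by ring, fun r hr => by linarith [claimmin r hr]⟩
      rintro ⟨h1, h2⟩
      exact ne_coords hpmina ⟨by linarith, h1⟩

lemma fpair_eq {a b c d : Plane} (h : ({a,b} : Finset Plane) = {c,d}) :
    (a = c ∧ b = d) ∨ (a = d ∧ b = c) := by
  have h' : ({a,b} : Set Plane) = {c,d} := by
    have := congrArg (fun s : Finset Plane => (↑s : Set Plane)) h
    simpa using this
  exact Set.pair_eq_pair_iff.mp h'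

lemma onesided_neg {Q : Set Plane} {a' b' : Plane}
    (h : OneSided ((fun r : Plane => -r) '' Q) a' b') : OneSided Q (-a') (-b') := by
  obtain ⟨w0, w1, hw, hperp, hside⟩ := h
  refine ⟨-w0, -w1, ?_, ?_, ?_⟩
  · rintro ⟨h1, h2⟩
    exact hw ⟨by linarith, by linarith⟩
  · simp only [PiLp.neg_apply]
    linarith [hperp]
  · intro r hr
    have := hside (-r) ⟨r, hr, rfl⟩
    simp only [PiLp.neg_apply] at this ⊢
    linarith

lemma three_onesided {Q : Set Plane} (hQ : Q.Finite) (h3 : 3 ≤ Q.ncard) :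
    ∃ E : Finset (Finset Plane), E.card = 3 ∧ ∀ e ∈ E, ∃ a b : Plane,
      a ≠ b ∧ e = {a, b} ∧ a ∈ Q ∧ b ∈ Q ∧ OneSided Q a b := by
  classical
  obtain ⟨a, p, q, haQ, hpQ, hqQ, hpq, hpa, hqa, hosp, hosq, hlex⟩ := half_sides hQ h3
  set Qn := (fun r : Plane => -r) '' Q with hQn
  have hQnfin : Qn.Finite := hQ.image _
  have hQncard : 3 ≤ Qn.ncard := by
    rw [hQn, Set.ncard_image_of_injective Q neg_injective]; exact h3
  obtain ⟨a', p', q', ha'Q, hp'Q, hq'Q, hpq', hpa', hqa', hosp', hosq', hlex'⟩ :=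
    half_sides hQnfin hQncard
  -- pull back
  have hmem : ∀ {r : Plane}, r ∈ Qn → -r ∈ Q := by
    rintro r ⟨s, hs, rfl⟩
    simpa using hs
  set b := -a' with hb
  set pb := -p' with hpb
  set qb := -q' with hqb
  have hbQ : b ∈ Q := hmem ha'Q
  have hpbQ : pb ∈ Q := hmem hp'Q
  have hqbQ : qb ∈ Q := hmem hq'Q
  have hpbqb : pb ≠ qb := fun h => hpq' (neg_injective (by rw [← hpb, ← hqb]; exact h))
  have hpbb : pb ≠ b := fun h => hpa' (neg_injective (by rw [← hpb, ← hb]; exact h))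
  have hqbb : qb ≠ b := fun h => hqa' (neg_injective (by rw [← hqb, ← hb]; exact h))
  have hospb : OneSided Q b pb := onesided_neg hosp'
  have hosqb : OneSided Q b qb := onesided_neg hosq'
  -- b is the lex max
  have hlexb : ∀ r ∈ Q, r 0 ≤ b 0 ∧ (r 0 = b 0 → r 1 ≤ b 1) := by
    intro r hr
    have := hlex' (-r) ⟨r, hr, rfl⟩
    simp only [PiLp.neg_apply] at this
    have eb0 : b 0 = -(a' 0) := by rw [hb]; simp only [PiLp.neg_apply]
    have eb1 : b 1 = -(a' 1) := by rw [hb]; simp only [PiLp.neg_apply]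
    constructor
    · rw [eb0]; linarith [this.1]
    · intro h
      rw [eb1]
      have : a' 1 ≤ -(r 1) := this.2 (by rw [eb0] at h; linarith)
      linarith
  have hab : a ≠ b := by
    intro h
    have hsub : Q ⊆ {a} := by
      intro r hr
      have h1 := hlex r hr
      have h2 := hlexb r hr
      rw [← h] at h2
      have hr0 : r 0 = a 0 := le_antisymm h2.1 h1.1
      have hr1 : r 1 = a 1 := le_antisymm (h2.2 hr0) (h1.2 hr0)
      exact (plane_ext hr0 hr1 : r = a)
    have := Set.ncard_le_ncard hsub (Set.finite_singleton a)
    rw [Set.ncard_singleton] at this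
    omega
  -- choose three distinct pairs
  set A1 : Finset Plane := {a, p} with hA1
  set A2 : Finset Plane := {a, q} with hA2
  set B1 : Finset Plane := {b, pb} with hB1
  set B2 : Finset Plane := {b, qb} with hB2
  have hA12 : A1 ≠ A2 := by
    intro h
    rcases fpair_eq h with ⟨_, h2⟩ | ⟨h1, _⟩
    · exact hpq h2
    · exact (Ne.symm hqa) h1
  have goodpair : ∀ (e : Finset Plane), e = A1 ∨ e = A2 ∨ e = B1 ∨ e = B2 →
      ∃ x y : Plane, x ≠ y ∧ e = {x, y} ∧ x ∈ Q ∧ y ∈ Q ∧ OneSided Q x y := by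
    rintro e (rfl | rfl | rfl | rfl)
    · exact ⟨a, p, Ne.symm hpa, rfl, haQ, hpQ, hosp⟩
    · exact ⟨a, q, Ne.symm hqa, rfl, haQ, hqQ, hosq⟩
    · exact ⟨b, pb, Ne.symm hpbb, rfl, hbQ, hpbQ, hospb⟩
    · exact ⟨b, qb, Ne.symm hqbb, rfl, hbQ, hqbQ, hosqb⟩
  by_cases hB : B1 = A1 ∨ B1 = A2
  · -- use B2
    have hB2A1 : B2 ≠ A1 := by
      intro h
      rcases fpair_eq h with ⟨h1, _⟩ | ⟨_, h2⟩
      · exact hab h1.symm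
      · rcases hB with h' | h'
        · rcases fpair_eq h' with ⟨hb1, _⟩ | ⟨_, hb2⟩
          · exact hab hb1.symm
          · -- pb = a and b = p ; also from h : qb = a → pb = qb
            rcases fpair_eq h with ⟨hc1, _⟩ | ⟨_, hc2⟩
            · exact hab hc1.symm
            · exact hpbqb (hb2.trans hc2.symm)
        · rcases fpair_eq h' with ⟨hb1, _⟩ | ⟨hb1, hb2⟩
          · exact hab hb1.symm
          · -- b = q, but from h : b = p → p = q
            rcases fpair_eq h with ⟨hc1, _⟩ | ⟨hc1, _⟩
            · exact hab hc1.symm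
            · exact hpq (hc1.symm.trans hb1)
    have hB2A2 : B2 ≠ A2 := by
      intro h
      rcases fpair_eq h with ⟨h1, _⟩ | ⟨h1, h2⟩
      · exact hab h1.symm
      · rcases hB with h' | h'
        · rcases fpair_eq h' with ⟨hb1, _⟩ | ⟨hb1, hb2⟩
          · exact hab hb1.symm
          · exact hpq (hb1.symm.trans h1)
        · rcases fpair_eq h' with ⟨hb1, _⟩ | ⟨_, hb2⟩
          · exact hab hb1.symm
          · exact hpbqb (hb2.trans h2.symm)
    refine ⟨{A1, A2, B2}, ?_, ?_⟩
    · rw [Finset.card_insert_of_notMem (by simp [hA12, Ne.symm hB2A1]),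
        Finset.card_insert_of_notMem (by simp [Ne.symm hB2A2])]
      simp
    · intro e he
      simp only [Finset.mem_insert, Finset.mem_singleton] at he
      rcases he with rfl | rfl | rfl
      · exact goodpair _ (Or.inl rfl)
      · exact goodpair _ (Or.inr (Or.inl rfl))
      · exact goodpair _ (Or.inr (Or.inr (Or.inr rfl)))
  · push_neg at hB
    refine ⟨{A1, A2, B1}, ?_, ?_⟩
    · rw [Finset.card_insert_of_notMem (by simp [hA12, Ne.symm hB.1]),
        Finset.card_insert_of_notMem (by simp [Ne.symm hB.2])]
      simp
    · intro e he
      simp only [Finset.mem_insert, Finset.mem_singleton] at he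
      rcases he with rfl | rfl | rfl
      · exact goodpair _ (Or.inl rfl)
      · exact goodpair _ (Or.inr (Or.inl rfl))
      · exact goodpair _ (Or.inr (Or.inr (Or.inl rfl)))

lemma vtx_finite_bound {Q : Set Plane} (hQ : Q.Finite) (h3 : 3 ≤ Q.ncard) :
    (vtx Q).Finite ∧ 3 * (vtx Q).ncard + 3 ≤ Q.ncard * (Q.ncard - 1) := by
  classical
  set Sf := hQ.toFinset with hSf
  have hScard : Sf.card = Q.ncard := (Set.ncard_eq_toFinset_card Q hQ).symm
  -- the choice of a 3-element subset of the nearest set of each vertex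
  set Tfun : Plane → Finset Plane := fun x =>
    if h : ∃ t : Finset Plane, ↑t ⊆ nearest Q x ∧ t.card = 3 then h.choose else ∅ with hTfun
  have hT : ∀ x ∈ vtx Q, ↑(Tfun x) ⊆ nearest Q x ∧ (Tfun x).card = 3 := by
    intro x hx
    have hnf : (nearest Q x).Finite := hQ.subset nearest_subset
    have hcard : 3 ≤ hnf.toFinset.card := by
      have he := hnf.encard_eq_coe_toFinset_card
      have hx' : 3 ≤ (nearest Q x).encard := hx
      rw [he] at hx'
      exact_mod_cast hx'
    obtain ⟨t, hts, htc⟩ := Finset.exists_subset_card_eq hcard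
    have hex : ∃ t : Finset Plane, ↑t ⊆ nearest Q x ∧ t.card = 3 :=
      ⟨t, by rw [← hnf.coe_toFinset]; exact_mod_cast hts, htc⟩
    rw [hTfun]
    simp only [dif_pos hex]
    exact hex.choose_spec
  have hTnearest : ∀ x ∈ vtx Q, ∀ c ∈ Tfun x, c ∈ nearest Q x := by
    intro x hx c hc
    exact (hT x hx).1 hc
  have hTinj : ∀ x ∈ vtx Q, ∀ y ∈ vtx Q, Tfun x = Tfun y → x = y := by
    intro x hx y hy hxy
    obtain ⟨a, b, c, ha, hb, hc, hab, hac, hbc⟩ := Finset.two_lt_card_iff.mp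
      (by rw [(hT x hx).2]; norm_num : 2 < (Tfun x).card)
    exact common3 hab hac hbc (hTnearest x hx a ha) (hTnearest x hx b hb) (hTnearest x hx c hc)
      (hTnearest y hy a (hxy ▸ ha)) (hTnearest y hy b (hxy ▸ hb)) (hTnearest y hy c (hxy ▸ hc))
  have hTSf : ∀ x ∈ vtx Q, Tfun x ⊆ Sf := by
    intro x hx
    intro c hc
    exact hQ.mem_toFinset.mpr (nearest_subset (hTnearest x hx c hc))
  -- finiteness of vtx Q
  have hVfin : (vtx Q).Finite := by
    apply Set.Finite.of_finite_image (f := Tfun) _ (fun x hx y hy => hTinj x hx y hy)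
    apply Set.Finite.subset (Sf.powersetCard 3).finite_toSet
    rintro t ⟨x, hx, rfl⟩
    simp only [Finset.mem_coe]
    exact Finset.mem_powersetCard.mpr ⟨hTSf x hx, (hT x hx).2⟩
  set Vf := hVfin.toFinset with hVf
  have hVcard : Vf.card = (vtx Q).ncard := (Set.ncard_eq_toFinset_card _ hVfin).symm
  have hVmem : ∀ x ∈ Vf, x ∈ vtx Q := fun x hx => hVfin.mem_toFinset.mp hx
  set Epairs := Sf.powersetCard 2 with hEpairs
  -- counting
  have hsum1 : ∑ x ∈ Vf, ((Tfun x).powersetCard 2).card = 3 * Vf.card := by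
    rw [Finset.sum_congr rfl (fun x hx => ?_), Finset.sum_const, smul_eq_mul, mul_comm]
    rw [Finset.card_powersetCard, (hT x (hVmem x hx)).2]
    norm_num
  have heqfilter : ∀ x ∈ Vf, (Tfun x).powersetCard 2 = Epairs.filter (fun e => e ⊆ Tfun x) := by
    intro x hx
    ext e
    simp only [Finset.mem_powersetCard, Finset.mem_filter, hEpairs]
    constructor
    · rintro ⟨hsub, hcard⟩
      exact ⟨⟨hsub.trans (hTSf x (hVmem x hx)), hcard⟩, hsub⟩
    · rintro ⟨⟨_, hcard⟩, hsub⟩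
      exact ⟨hsub, hcard⟩
  have hsum2 : ∑ x ∈ Vf, ((Tfun x).powersetCard 2).card
      = ∑ e ∈ Epairs, (Vf.filter (fun x => e ⊆ Tfun x)).card := by
    rw [Finset.sum_congr rfl (fun x hx => by rw [heqfilter x hx, Finset.card_filter])]
    rw [Finset.sum_comm]
    exact Finset.sum_congr rfl (fun e he => (Finset.card_filter _ _).symm)
  -- bounds on multiplicities
  have bound2 : ∀ e ∈ Epairs, (Vf.filter (fun x => e ⊆ Tfun x)).card ≤ 2 := by
    intro e he
    by_contra hgt
    push_neg at hgt
    obtain ⟨x, y, z, hx, hy, hz, hxy, hxz, hyz⟩ := Finset.two_lt_card_iff.mp hgt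
    rw [Finset.mem_filter] at hx hy hz
    obtain ⟨a, b, hab, rfl⟩ := Finset.card_eq_two.mp (Finset.mem_powersetCard.mp he).2
    have hmem : ∀ w : Plane, w ∈ Vf → ({a, b} : Finset Plane) ⊆ Tfun w →
        a ∈ nearest Q w ∧ b ∈ nearest Q w := by
      intro w hw hsub
      have := Finset.insert_subset_iff.mp hsub
      exact ⟨hTnearest w (hVmem w hw) a this.1,
        hTnearest w (hVmem w hw) b (Finset.singleton_subset_iff.mp this.2)⟩
    obtain ⟨hax, hbx⟩ := hmem x hx.1 hx.2
    obtain ⟨hay, hby⟩ := hmem y hy.1 hy.2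
    obtain ⟨haz, hbz⟩ := hmem z hz.1 hz.2
    exact pair_le_two hxy hxz hyz hab (hVmem x hx.1) (hVmem y hy.1) (hVmem z hz.1)
      hax hbx hay hby haz hbz
  -- the three one-sided pairs
  obtain ⟨E3, hE3card, hE3⟩ := three_onesided hQ h3
  have hE3sub : E3 ⊆ Epairs := by
    intro e he
    obtain ⟨a, b, hab, rfl, haQ, hbQ, _⟩ := hE3 e he
    refine Finset.mem_powersetCard.mpr ⟨?_, Finset.card_pair hab⟩
    intro c hc
    rcases Finset.mem_insert.mp hc with rfl | hc
    · exact hQ.mem_toFinset.mpr haQ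
    · rw [Finset.mem_singleton.mp hc]
      exact hQ.mem_toFinset.mpr hbQ
  have bound1 : ∀ e ∈ E3, (Vf.filter (fun x => e ⊆ Tfun x)).card ≤ 1 := by
    intro e he
    by_contra hgt
    push_neg at hgt
    obtain ⟨x, hx, y, hy, hxy⟩ := Finset.one_lt_card.mp hgt
    rw [Finset.mem_filter] at hx hy
    obtain ⟨a, b, hab, rfl, haQ, hbQ, hos⟩ := hE3 e he
    have hmem : ∀ w : Plane, w ∈ Vf → ({a, b} : Finset Plane) ⊆ Tfun w →
        a ∈ nearest Q w ∧ b ∈ nearest Q w := by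
      intro w hw hsub
      have := Finset.insert_subset_iff.mp hsub
      exact ⟨hTnearest w (hVmem w hw) a this.1,
        hTnearest w (hVmem w hw) b (Finset.singleton_subset_iff.mp this.2)⟩
    obtain ⟨hax, hbx⟩ := hmem x hx.1 hx.2
    obtain ⟨hay, hby⟩ := hmem y hy.1 hy.2
    exact onesided_le_one hxy hab (hVmem x hx.1) (hVmem y hy.1) hax hbx hay hby hos
  -- put everything together
  have hsplit : ∑ e ∈ Epairs \ E3, (Vf.filter (fun x => e ⊆ Tfun x)).card
      + ∑ e ∈ E3, (Vf.filter (fun x => e ⊆ Tfun x)).card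
      = ∑ e ∈ Epairs, (Vf.filter (fun x => e ⊆ Tfun x)).card :=
    Finset.sum_sdiff hE3sub
  have hb1 : ∑ e ∈ E3, (Vf.filter (fun x => e ⊆ Tfun x)).card ≤ 3 := by
    calc ∑ e ∈ E3, (Vf.filter (fun x => e ⊆ Tfun x)).card
        ≤ ∑ _e ∈ E3, 1 := Finset.sum_le_sum bound1
      _ = 3 := by rw [Finset.sum_const, smul_eq_mul, hE3card]
  have hb2 : ∑ e ∈ Epairs \ E3, (Vf.filter (fun x => e ⊆ Tfun x)).card
      ≤ 2 * (Epairs.card - 3) := by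
    calc ∑ e ∈ Epairs \ E3, (Vf.filter (fun x => e ⊆ Tfun x)).card
        ≤ ∑ _e ∈ Epairs \ E3, 2 :=
          Finset.sum_le_sum (fun e he => bound2 e (Finset.mem_sdiff.mp he).1)
      _ = (Epairs.card - 3) * 2 := by
          rw [Finset.sum_const, smul_eq_mul, Finset.card_sdiff_of_subset hE3sub, hE3card]
      _ = 2 * (Epairs.card - 3) := mul_comm _ _
  have hEcard : Epairs.card = (Q.ncard).choose 2 := by
    rw [hEpairs, Finset.card_powersetCard, hScard]
  have hC3 : 3 ≤ Epairs.card := by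
    rw [hEcard]
    calc 3 = Nat.choose 3 2 := by decide
      _ ≤ (Q.ncard).choose 2 := Nat.choose_le_choose 2 h3
  have h2C : 2 * Epairs.card = Q.ncard * (Q.ncard - 1) := by
    rw [hEcard, Nat.choose_two_right]
    have heven : 2 ∣ Q.ncard * (Q.ncard - 1) := by
      rcases Nat.even_mul_succ_self (Q.ncard - 1) with ⟨k, hk⟩
      have : Q.ncard - 1 + 1 = Q.ncard := by omega
      rw [this] at hk
      exact ⟨k, by rw [mul_comm]; omega⟩
    omega
  refine ⟨hVfin, ?_⟩
  have htotal : 3 * Vf.card = ∑ e ∈ Epairs, (Vf.filter (fun x => e ⊆ Tfun x)).card :=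
    hsum1.symm.trans hsum2
  have hk : 3 * Vf.card ≤ 2 * (Epairs.card - 3) + 3 := by
    rw [htotal, ← hsplit]
    omega
  have hfin2 : 3 * Vf.card + 3 ≤ 2 * Epairs.card := by omega
  rw [← hVcard, ← h2C]
  exact hfin2

lemma vtx_empty_of_small {S : Set Plane} (hS : S.Finite) (h : S.ncard ≤ 2) : vtx S = ∅ := by
  ext x
  simp only [Set.mem_empty_iff_false, iff_false]
  intro hx
  have hx' : 3 ≤ (nearest S x).encard := hx
  have h1 : (nearest S x).encard ≤ S.encard := Set.encard_mono nearest_subset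
  have h2 : S.encard ≤ 2 := by
    rw [hS.encard_eq_coe_toFinset_card]
    have : hS.toFinset.card ≤ 2 := by
      rw [← Set.ncard_eq_toFinset_card S hS]; exact h
    exact_mod_cast this
  have h3 : (3:ℕ∞) ≤ 2 := le_trans hx' (le_trans h1 h2)
  have : (3:ℕ) ≤ 2 := by exact_mod_cast h3
  omega

lemma dies {R : Set Plane} (hR : R.Finite) (h4 : R.ncard ≤ 4) :
    ∃ m, 1 ≤ m ∧ m ≤ 3 ∧ vtx^[m] R = ∅ := by
  rcases le_or_gt R.ncard 2 with h | h
  · exact ⟨1, le_refl 1, by norm_num, by simpa using vtx_empty_of_small hR h⟩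
  · obtain ⟨hfin1, hb1⟩ := vtx_finite_bound hR (by omega)
    rcases le_or_gt (vtx R).ncard 2 with h2 | h2
    · refine ⟨2, by norm_num, by norm_num, ?_⟩
      have h22 : vtx^[2] R = vtx (vtx R) := by
        rw [show (2:ℕ) = 1 + 1 from rfl, Function.iterate_succ_apply', Function.iterate_one]
      rw [h22]
      exact vtx_empty_of_small hfin1 h2
    · -- here R.ncard = 4 and (vtx R).ncard = 3
      have hn : R.ncard = 3 ∨ R.ncard = 4 := by omega
      have hk3 : (vtx R).ncard = 3 := by
        rcases hn with hn | hn <;> rw [hn] at hb1 <;> norm_num at hb1 <;> omega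
      obtain ⟨hfin2, hb2⟩ := vtx_finite_bound hfin1 (by omega)
      rw [hk3] at hb2
      norm_num at hb2
      refine ⟨3, by norm_num, le_refl 3, ?_⟩
      have h33 : vtx^[3] R = vtx (vtx (vtx R)) := by
        rw [show (3:ℕ) = 2 + 1 from rfl, Function.iterate_succ_apply',
          show (2:ℕ) = 1 + 1 from rfl, Function.iterate_succ_apply', Function.iterate_one]
      rw [h33]
      exact vtx_empty_of_small hfin2 (by omega)

theorem five_point_dichotomy' (P : Set Plane) (hP : P.Finite) (h : P.ncard = 5) :
    (∃ n : ℕ, 1 ≤ n ∧ vtx^[n] P = ∅) ∨ (∀ n : ℕ, (vtx^[n] P).ncard = 5) := by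
  by_cases hdie : ∃ n : ℕ, 1 ≤ n ∧ vtx^[n] P = ∅
  · exact Or.inl hdie
  · push_neg at hdie
    right
    have key : ∀ n : ℕ, (vtx^[n] P).Finite ∧ (vtx^[n] P).ncard = 5 := by
      intro n
      induction n with
      | zero => exact ⟨hP, h⟩
      | succ n ih =>
        obtain ⟨hfin, hcard⟩ := ih
        obtain ⟨hfin', hb⟩ := vtx_finite_bound hfin (by omega)
        rw [hcard] at hb
        norm_num at hb
        have hit : vtx^[n+1] P = vtx (vtx^[n] P) := Function.iterate_succ_apply' vtx n P
        rcases le_or_gt (vtx (vtx^[n] P)).ncard 4 with hle | hgt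
        · exfalso
          obtain ⟨m, hm1, _, hm0⟩ := dies hfin' hle
          have hnonempty := hdie (m + (n+1)) (by omega)
          rw [Function.iterate_add_apply, hit, hm0] at hnonempty
          exact Set.not_nonempty_empty hnonempty
        · exact ⟨by rw [hit]; exact hfin', by rw [hit]; omega⟩
    exact fun n => (key n).2

theorem five_point_dichotomy (P : Set Plane) (hP : P.Finite) (h : P.ncard = 5) :
    (∃ n : ℕ, 1 ≤ n ∧ vtx^[n] P = ∅) ∨ (∀ n : ℕ, (vtx^[n] P).ncard = 5) :=
  five_point_dichotomy' P hP h
end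

section
/- Let P be a finite subset of the Euclidean plane ℝ², let x ∈ 𝒱(P) be a Voronoi vertex, and let p ∈ P be such that x ∈ V_P(p). Then x is an extreme point of the convex set V_P(p). (This expresses that the interior angle of the Voronoi polygon V_P(p) at any of its vertices is strictly less than π.) -/
open Set

/-- Two distinct points cannot both be equidistant from three distinct points. -/
lemma key_geom (x₁ x₂ p q r : Plane) (hv : x₁ ≠ x₂)
    (hpq : q ≠ p) (hpr : r ≠ p) (hqr : q ≠ r)
    (h1q : dist x₁ q = dist x₁ p) (h1r : dist x₁ r = dist x₁ p)
    (h2q : dist x₂ q = dist x₂ p) (h2r : dist x₂ r = dist x₂ p) : False := by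
  have hvne : x₂ - x₁ ≠ 0 := sub_ne_zero.mpr (Ne.symm hv)
  have hoq : (inner ℝ (x₂ - x₁) (q - p) : ℝ) = 0 := by
    have := EuclideanGeometry.inner_vsub_vsub_of_dist_eq_of_dist_eq
      (c₁ := x₁) (c₂ := x₂) (p₁ := p) (p₂ := q)
      (by rw [dist_comm p x₁, dist_comm q x₁, h1q])
      (by rw [dist_comm p x₂, dist_comm q x₂, h2q])
    simpa [vsub_eq_sub] using this
  have hor : (inner ℝ (x₂ - x₁) (r - p) : ℝ) = 0 := by
    have := EuclideanGeometry.inner_vsub_vsub_of_dist_eq_of_dist_eq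
      (c₁ := x₁) (c₂ := x₂) (p₁ := p) (p₂ := r)
      (by rw [dist_comm p x₁, dist_comm r x₁, h1r])
      (by rw [dist_comm p x₂, dist_comm r x₂, h2r])
    simpa [vsub_eq_sub] using this
  have hq0 : q - p ≠ 0 := sub_ne_zero.mpr hpq
  set K : Submodule ℝ Plane := (Submodule.span ℝ {x₂ - x₁})ᗮ with hK
  have hqK : q - p ∈ K := Submodule.mem_orthogonal_singleton_iff_inner_right.mpr hoq
  have hrK : r - p ∈ K := Submodule.mem_orthogonal_singleton_iff_inner_right.mpr hor
  have hfin : Module.finrank ℝ K = 1 := by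
    have h1 := Submodule.finrank_add_finrank_orthogonal (Submodule.span ℝ {x₂ - x₁})
    rw [finrank_span_singleton hvne, finrank_euclideanSpace_fin, ← hK] at h1
    omega
  have hspan : Submodule.span ℝ {q - p} = K := by
    apply Submodule.eq_of_le_of_finrank_eq
    · rw [Submodule.span_le, Set.singleton_subset_iff]; exact hqK
    · rw [finrank_span_singleton hq0, hfin]
  obtain ⟨t, ht⟩ := Submodule.mem_span_singleton.mp (hspan ▸ hrK)
  set u : Plane := q - p with hu
  set w : Plane := p - x₁ with hw
  have e1 : ‖w + u‖ = ‖w‖ := by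
    rw [hu, hw]
    have h : p - x₁ + (q - p) = q - x₁ := by abel
    rw [h]
    rw [dist_eq_norm, dist_eq_norm] at h1q
    simpa [norm_sub_rev] using h1q
  have e2 : ‖w + t • u‖ = ‖w‖ := by
    rw [hw, ht]
    have h : p - x₁ + (r - p) = r - x₁ := by abel
    rw [h]
    rw [dist_eq_norm, dist_eq_norm] at h1r
    simpa [norm_sub_rev] using h1r
  have sq1 : 2 * (inner ℝ w u : ℝ) + ‖u‖ ^ 2 = 0 := by
    have := congrArg (·^2) e1
    simp only [norm_add_sq_real] at this
    nlinarith [this]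
  have sq2 : t * (2 * (inner ℝ w u : ℝ) + t * ‖u‖ ^ 2) = 0 := by
    have := congrArg (·^2) e2
    simp only [norm_add_sq_real, norm_smul, real_inner_smul_right] at this
    simp only [Real.norm_eq_abs] at this
    nlinarith [this, sq_abs t]
  have ht0 : t ≠ 0 := by
    rintro rfl
    simp only [zero_smul] at ht
    exact hpr (sub_eq_zero.mp ht.symm)
  have hu2 : ‖u‖ ^ 2 ≠ 0 := pow_ne_zero 2 (norm_ne_zero_iff.mpr hq0)
  have ht1 : t = 1 := by
    rcases mul_eq_zero.mp sq2 with h | h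
    · exact absurd h ht0
    · have h3 : t * ‖u‖ ^ 2 = 1 * ‖u‖ ^ 2 := by linarith
      exact mul_right_cancel₀ hu2 h3
  apply hqr
  have h4 : r - p = q - p := by rw [← ht, ht1, one_smul]
  exact (sub_left_inj.mp h4).symm

/-- If an affine distance-difference vanishes at a strict convex combination and is
nonnegative at the endpoints, it vanishes at the endpoints. -/
lemma dist_eq_of_combo (p s x₁ x₂ : Plane) {a b : ℝ} (ha : 0 < a) (hb : 0 < b)
    (hab : a + b = 1)
    (h1 : dist (a • x₁ + b • x₂) p = dist (a • x₁ + b • x₂) s)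
    (g1 : dist x₁ p ≤ dist x₁ s) (g2 : dist x₂ p ≤ dist x₂ s) :
    dist x₁ p = dist x₁ s ∧ dist x₂ p = dist x₂ s := by
  set y := a • x₁ + b • x₂ with hy
  have f : ∀ z : Plane, dist z s ^ 2 - dist z p ^ 2
      = 2 * (inner ℝ z (p - s) : ℝ) + (‖s‖ ^ 2 - ‖p‖ ^ 2) := by
    intro z
    rw [dist_eq_norm, dist_eq_norm, norm_sub_sq_real, norm_sub_sq_real, inner_sub_right]
    ring
  have hfy : dist y s ^ 2 - dist y p ^ 2 = 0 := by rw [h1]; ring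
  have hcombo : dist y s ^ 2 - dist y p ^ 2
      = a * (dist x₁ s ^ 2 - dist x₁ p ^ 2) + b * (dist x₂ s ^ 2 - dist x₂ p ^ 2) := by
    rw [f, f, f, hy, inner_add_left, real_inner_smul_left, real_inner_smul_left]
    nlinarith [hab]
  have h1' : 0 ≤ dist x₁ s ^ 2 - dist x₁ p ^ 2 := by
    nlinarith [dist_nonneg (x := x₁) (y := p), dist_nonneg (x := x₁) (y := s)]
  have h2' : 0 ≤ dist x₂ s ^ 2 - dist x₂ p ^ 2 := by
    nlinarith [dist_nonneg (x := x₂) (y := p), dist_nonneg (x := x₂) (y := s)]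
  have z1 : dist x₁ s ^ 2 = dist x₁ p ^ 2 := by nlinarith
  have z2 : dist x₂ s ^ 2 = dist x₂ p ^ 2 := by nlinarith
  exact ⟨((pow_left_inj₀ dist_nonneg dist_nonneg two_ne_zero).mp z1.symm),
    ((pow_left_inj₀ dist_nonneg dist_nonneg two_ne_zero).mp z2.symm)⟩

theorem vertex_is_extreme_point (P : Set Plane) (hP : P.Finite)
    (x : Plane) (hx : x ∈ vtx P) (p : Plane) (hp : p ∈ P) (hxp : x ∈ cell P p) :
    x ∈ Set.extremePoints ℝ (cell P p) := by
  rw [mem_extremePoints]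
  refine ⟨hxp, fun x₁ hx₁ x₂ hx₂ hseg => ?_⟩
  have hpn : p ∈ nearest P x := ⟨hp, hxp⟩
  have h2 : 1 < (nearest P x \ {p}).encard := by
    have h3 : (3 : ℕ∞) ≤ (nearest P x).encard := hx
    rw [← Set.encard_diff_singleton_add_one hpn] at h3
    have h4 : (2 : ℕ∞) ≤ (nearest P x \ {p}).encard := by
      rw [show (3 : ℕ∞) = 2 + 1 from rfl] at h3
      exact (WithTop.add_le_add_iff_right (by simp : (1:ℕ∞) ≠ ⊤)).mp h3
    exact lt_of_lt_of_le (by norm_num) h4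
  obtain ⟨q, r, hq, hr, hqr⟩ := Set.one_lt_encard_iff.mp h2
  obtain ⟨⟨hqP, hqn⟩, hqp⟩ := hq
  obtain ⟨⟨hrP, hrn⟩, hrp⟩ := hr
  simp only [Set.mem_singleton_iff] at hqp hrp
  have hxq : dist x p = dist x q := le_antisymm (hxp q hqP) (hqn p hp)
  have hxr : dist x p = dist x r := le_antisymm (hxp r hrP) (hrn p hp)
  obtain ⟨a, b, ha, hb, hab, hy⟩ := hseg
  have dq := dist_eq_of_combo p q x₁ x₂ ha hb hab (by rw [hy]; exact hxq) (hx₁ q hqP) (hx₂ q hqP)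
  have dr := dist_eq_of_combo p r x₁ x₂ ha hb hab (by rw [hy]; exact hxr) (hx₁ r hrP) (hx₂ r hrP)
  by_cases h12 : x₁ = x₂
  · subst h12
    have hx1 : x₁ = x := by rw [← hy, ← add_smul, hab, one_smul]
    exact ⟨hx1, hx1⟩
  · exfalso
    exact key_geom x₁ x₂ p q r h12 hqp hrp hqr dq.1.symm dr.1.symm dq.2.symm dr.2.symm
end
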